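/- arXiv:1811.09526 — 3 statements merged into one kernel-verified Lean document; each statement's English description precedes it below -/
import Mathlib

section
/- Let ξ : ~H(G,K,θ) → End(Ind_K^G V) be the map defined by (ξ(F)f)(g) = Σ_{h∈G} F(h⁻¹g)(f(h)) for F ∈ ~H(G,K,θ), f ∈ Ind_K^G V, g ∈ G. Then ξ(F) commutes with the G-action on Ind_K^G V for every F ∈ ~H(G,K,θ), and ξ is a bijective *-algebra isomorphism from ~H(G,K,θ) onto the commutant End_G(Ind_K^G V): it is ℂ-linear, ξ(F₁*F₂) = ξ(F₁)∘ξ(F₂), ξ(F*) = ξ(F)* (adjoint), and moreover ⟨ξ(F₁), ξ(F₂)⟩ = |K|·⟨F₁, F₂⟩ for all F₁, F₂ ∈ ~H(G,K,θ), where End(Ind_K^G V) carries the normalized Hilbert–Schmidt inner product ⟨T₁,T₂⟩ = tr(T₂*T₁)/dim(Ind_K^G V). -/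
open scoped BigOperators ComplexConjugate Classical

set_option linter.unusedSectionVars false
set_option synthInstance.maxHeartbeats 1000000
set_option maxHeartbeats 1000000

noncomputable section

namespace MFT

variable {G : Type} [Group G] [Fintype G]
variable {V : Type} [NormedAddCommGroup V] [InnerProductSpace ℂ V] [FiniteDimensional ℂ V]

/-- Left translation of functions on `G`: `(translate h f) g = f (h⁻¹ * g)`.
This is the left regular action of `G`. -/
def translate {A : Type} (h : G) (f : G → A) : G → A := fun g => f (h⁻¹ * g)

/-- A representation by linear automorphisms is unitary if it preserves the inner product. -/
def IsUnitaryRep {H W : Type} [Group H] [NormedAddCommGroup W] [InnerProductSpace ℂ W]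
    (ρ : H →* (W ≃ₗ[ℂ] W)) : Prop :=
  ∀ (h : H) (x y : W), (inner ℂ (ρ h x) (ρ h y) : ℂ) = (inner ℂ x y : ℂ)

/-- Irreducibility of a representation: the space is nonzero and has no proper nonzero
invariant subspace. -/
def IsIrreducibleRep {H W : Type} [Group H] [AddCommGroup W] [Module ℂ W]
    (ρ : H →* (W ≃ₗ[ℂ] W)) : Prop :=
  (⊥ : Submodule ℂ W) ≠ ⊤ ∧
    ∀ p : Submodule ℂ W, (∀ (h : H) (x : W), x ∈ p → ρ h x ∈ p) → p = ⊥ ∨ p = ⊤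

variable (K : Subgroup G) (θ : ↥K →* (V ≃ₗ[ℂ] V))

/-- The space `Ind_K^G V` of the representation induced by `θ`:
functions `f : G → V` with `f (g k) = θ k⁻¹ (f g)`. -/
def ind : Submodule ℂ (G → V) where
  carrier := {f | ∀ (g : G) (k : K), f (g * (k : G)) = θ k⁻¹ (f g)}
  add_mem' := by
    intro f₁ f₂ h₁ h₂ g k
    simp only [Pi.add_apply, h₁ g k, h₂ g k, map_add]
  zero_mem' := by intro g k; simp
  smul_mem' := by
    intro c f hf g k
    simp only [Pi.smul_apply, hf g k, map_smul]

theorem translate_mem_ind {f : G → V} (hf : f ∈ ind K θ) (h : G) : translate h f ∈ ind K θ := by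
  intro g k
  simpa [translate, mul_assoc] using hf (h⁻¹ * g) k

/-- The left regular action of `G` on the induced space, `λ(h) f = f (h⁻¹ ·)`. -/
def lamL (h : G) : ↥(ind K θ) →ₗ[ℂ] ↥(ind K θ) where
  toFun f := ⟨translate h ↑f, translate_mem_ind K θ f.2 h⟩
  map_add' f₁ f₂ := by apply Subtype.ext; funext g; simp [translate]
  map_smul' c f := by apply Subtype.ext; funext g; simp [translate]

instance : AddCommGroup (↥(ind K θ) →ₗ[ℂ] ↥(ind K θ)) := LinearMap.addCommGroup

instance : Module ℂ (↥(ind K θ) →ₗ[ℂ] ↥(ind K θ)) := LinearMap.module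

/-- The Hecke algebra condition: `F (k₁ g k₂) = θ k₂⁻¹ ∘ F g ∘ θ k₁⁻¹`. -/
def IsHecke (F : G → (V →ₗ[ℂ] V)) : Prop :=
  ∀ (g : G) (k₁ k₂ : K),
    F ((k₁ : G) * g * (k₂ : G)) = (θ k₂⁻¹).toLinearMap ∘ₗ F g ∘ₗ (θ k₁⁻¹).toLinearMap

/-- Convolution on the Hecke algebra: `(F₁ * F₂) g = ∑ h, F₁ (h⁻¹ g) ∘ F₂ h`. -/
def heckeConv (F₁ F₂ : G → (V →ₗ[ℂ] V)) : G → (V →ₗ[ℂ] V) :=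
  fun g => ∑ h : G, F₁ (h⁻¹ * g) ∘ₗ F₂ h

/-- Involution on the Hecke algebra: `F* g = (F g⁻¹)*`. -/
def heckeStar (F : G → (V →ₗ[ℂ] V)) : G → (V →ₗ[ℂ] V) :=
  fun g => LinearMap.adjoint (F g⁻¹)

/-- The inner product on the Hecke algebra:
`⟨F₁, F₂⟩ = ∑ g, (dim V)⁻¹ tr (F₂(g)* ∘ F₁(g))`. -/
def heckeInner (F₁ F₂ : G → (V →ₗ[ℂ] V)) : ℂ :=
  ∑ g : G, (Module.finrank ℂ V : ℂ)⁻¹ *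
    LinearMap.trace ℂ V (LinearMap.adjoint (F₂ g) ∘ₗ F₁ g)

/-- `(ξ F) f g = ∑ h, F (h⁻¹ g) (f h)`. -/
def xiFun (F : G → (V →ₗ[ℂ] V)) (f : G → V) : G → V := fun g => ∑ h : G, F (h⁻¹ * g) (f h)

/-- `ξ F` as a linear endomorphism of `G → V`. -/
def xiL (F : G → (V →ₗ[ℂ] V)) : (G → V) →ₗ[ℂ] (G → V) where
  toFun := xiFun F
  map_add' f₁ f₂ := by funext g; simp [xiFun, Finset.sum_add_distrib]
  map_smul' c f := by funext g; simp [xiFun, Finset.smul_sum]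

/-- The paper's inner product on the induced space:
`⟨f₁, f₂⟩ = |K|⁻¹ ∑ g, ⟨f₁ g, f₂ g⟩_V` (conjugate-linear in the second variable). -/
def innerInd (f₁ f₂ : G → V) : ℂ := (Nat.card K : ℂ)⁻¹ * ∑ g : G, (inner ℂ (f₂ g) (f₁ g) : ℂ)

/-- Convolution of complex valued functions on `G`. -/
def convC (f₁ f₂ : G → ℂ) : G → ℂ := fun g => ∑ h : G, f₁ h * f₂ (h⁻¹ * g)

/-- The involution `f* g = conj (f g⁻¹)` on `L(G)`. -/
def starC (f : G → ℂ) : G → ℂ := fun g => conj (f g⁻¹)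

/-- The paper's inner product on `L(G)`: `⟨f₁, f₂⟩ = ∑ g, f₁ g • conj (f₂ g)`. -/
def innerC (f₁ f₂ : G → ℂ) : ℂ := ∑ g : G, f₁ g * conj (f₂ g)

/-- The function `ψ (k) = (d_θ/|K|) ⟨v, θ k v⟩` on `K`, extended by `0` on `G \ K`. -/
def psi (v : V) : G → ℂ := fun g =>
  if h : g ∈ K then ((Module.finrank ℂ V : ℂ) / (Nat.card K : ℂ)) * (inner ℂ (θ ⟨g, h⟩ v) v : ℂ)
  else 0

/-- `(T_v f) g = √(d_θ/|K|) ⟨f g, v⟩`. -/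
def Tv (v : V) (f : G → V) : G → ℂ := fun g =>
  (Real.sqrt ((Module.finrank ℂ V : ℝ) / (Nat.card K : ℝ)) : ℂ) * (inner ℂ v (f g) : ℂ)

/-- The Hecke algebra `H(G,K,ψ) = {f : f = ψ * f * ψ}` as a set. -/
def HSet (v : V) : Set (G → ℂ) := {f | convC (convC (psi K θ v) f) (psi K θ v) = f}

/-- `(S_v F) g = d_θ ⟨F g v, v⟩`. -/
def Sv (v : V) (F : G → (V →ₗ[ℂ] V)) : G → ℂ :=
  fun g => (Module.finrank ℂ V : ℂ) * (inner ℂ v (F g v) : ℂ)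

/-- A spherical function: an element of `H(G,K,ψ)` taking value `1` at the identity which
is an eigenvector of all convolution operators coming from `H(G,K,ψ)`. -/
def IsSpherical (v : V) (φ : G → ℂ) : Prop :=
  φ ∈ HSet K θ v ∧ φ 1 = 1 ∧ ∀ f ∈ HSet K θ v, ∃ c : ℂ, convC φ f = c • φ

/-- The intertwining space `Hom_{K_s}(Res^K_{K_s} θ, θ^s)` where `K_s = K ∩ s K s⁻¹`
and `θ^s (x) = θ (s⁻¹ x s)`. -/
def interSpace (s : G) : Submodule ℂ (V →ₗ[ℂ] V) where
  carrier := {T | ∀ (x : G) (hx : x ∈ K) (hx' : s⁻¹ * x * s ∈ K),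
      T ∘ₗ (θ ⟨x, hx⟩).toLinearMap = (θ ⟨s⁻¹ * x * s, hx'⟩).toLinearMap ∘ₗ T}
  add_mem' := by
    intro a b ha hb x hx hx'
    simp only [LinearMap.add_comp, LinearMap.comp_add, ha x hx hx', hb x hx hx']
  zero_mem' := by
    intro x hx hx'
    simp
  smul_mem' := by
    intro c a ha x hx hx'
    simp only [LinearMap.smul_comp, LinearMap.comp_smul, ha x hx hx']

/-- `S` is a complete set of representatives of the double cosets `K\G/K`. -/
def IsDoubleCosetReps (S : Finset G) : Prop :=
  ∀ g : G, ∃! s : G, s ∈ S ∧ ∃ k₁ k₂ : K, g = (k₁ : G) * s * (k₂ : G)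

/-- The commutant `End_G(Ind_K^G V)`. -/
def commutant : Submodule ℂ (↥(ind K θ) →ₗ[ℂ] ↥(ind K θ)) where
  carrier := {T | ∀ (h : G) (f : ↥(ind K θ)), T (lamL K θ h f) = lamL K θ h (T f)}
  add_mem' := by
    intro a b ha hb h f
    simp [ha h f, hb h f]
  zero_mem' := by intro h f; simp
  smul_mem' := by
    intro c a ha h f
    simp [ha h f]

/-- The space `Hom_G(W, Ind_K^G V)` of `G`-equivariant linear maps from `(σ, W)` to the
induced representation. -/
def homGInd {W : Type} [AddCommGroup W] [Module ℂ W] (σ : G →* (W ≃ₗ[ℂ] W)) :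
    Submodule ℂ (W →ₗ[ℂ] (G → V)) where
  carrier := {A | (∀ w : W, A w ∈ ind K θ) ∧ ∀ (g : G) (w : W), A (σ g w) = translate g (A w)}
  add_mem' := by
    rintro A B ⟨hA₁, hA₂⟩ ⟨hB₁, hB₂⟩
    refine ⟨fun w => (ind K θ).add_mem (hA₁ w) (hB₁ w), fun g w => ?_⟩
    funext x
    simp [translate, hA₂ g w, hB₂ g w, Pi.add_apply]
  zero_mem' := by
    refine ⟨fun w => (ind K θ).zero_mem, fun g w => ?_⟩
    funext x
    simp [translate]
  smul_mem' := by
    rintro c A ⟨hA₁, hA₂⟩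
    refine ⟨fun w => (ind K θ).smul_mem c (hA₁ w), fun g w => ?_⟩
    funext x
    simp [translate, hA₂ g w]

/-- `Ind_K^G θ` is multiplicity-free: every irreducible representation of `G` occurs with
multiplicity at most `1`. -/
def IsMultFree : Prop :=
  ∀ (W : Type) [AddCommGroup W] [Module ℂ W] [FiniteDimensional ℂ W]
    (σ : G →* (W ≃ₗ[ℂ] W)), IsIrreducibleRep σ → Module.finrank ℂ ↥(homGInd K θ σ) ≤ 1

theorem convC_add_left (f₁ f₂ g : G → ℂ) : convC (f₁ + f₂) g = convC f₁ g + convC f₂ g := by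
  funext x
  simp [convC, add_mul, Finset.sum_add_distrib]

theorem convC_add_right (f g₁ g₂ : G → ℂ) : convC f (g₁ + g₂) = convC f g₁ + convC f g₂ := by
  funext x
  simp [convC, mul_add, Finset.sum_add_distrib]

theorem convC_smul_left (c : ℂ) (f g : G → ℂ) : convC (c • f) g = c • convC f g := by
  funext x
  simp [convC, Finset.mul_sum, mul_assoc]

theorem convC_smul_right (c : ℂ) (f g : G → ℂ) : convC f (c • g) = c • convC f g := by
  funext x
  simp [convC, Finset.mul_sum, mul_left_comm]

theorem convC_zero_left (g : G → ℂ) : convC 0 g = 0 := by funext x; simp [convC]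

theorem convC_zero_right (f : G → ℂ) : convC f 0 = 0 := by funext x; simp [convC]

/-- The Hecke algebra `H(G,K,ψ)` as a subspace of `L(G)`. -/
def heckeSub (v : V) : Submodule ℂ (G → ℂ) where
  carrier := HSet K θ v
  add_mem' := by
    intro a b ha hb
    have ha' : convC (convC (psi K θ v) a) (psi K θ v) = a := ha
    have hb' : convC (convC (psi K θ v) b) (psi K θ v) = b := hb
    show convC (convC (psi K θ v) (a + b)) (psi K θ v) = a + b
    rw [convC_add_right, convC_add_left, ha', hb']
  zero_mem' := by
    show convC (convC (psi K θ v) 0) (psi K θ v) = 0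
    rw [convC_zero_right, convC_zero_left]
  smul_mem' := by
    intro c a ha
    have ha' : convC (convC (psi K θ v) a) (psi K θ v) = a := ha
    show convC (convC (psi K θ v) (c • a)) (psi K θ v) = c • a
    rw [convC_smul_right, convC_smul_left, ha']

/-- The subspace `I(G,K,ψ) = {f ∈ L(G) : f * ψ = f}`. -/
def ISub (v : V) : Submodule ℂ (G → ℂ) where
  carrier := {φ | convC φ (psi K θ v) = φ}
  add_mem' := by
    intro a b ha hb
    have ha' : convC a (psi K θ v) = a := ha
    have hb' : convC b (psi K θ v) = b := hb
    show convC (a + b) (psi K θ v) = a + b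
    rw [convC_add_left, ha', hb']
  zero_mem' := by
    show convC 0 (psi K θ v) = 0
    rw [convC_zero_left]
  smul_mem' := by
    intro c a ha
    have ha' : convC a (psi K θ v) = a := ha
    show convC (c • a) (psi K θ v) = c • a
    rw [convC_smul_left, ha']

/-- The subspace of `L(G)` spanned by the left translates of `φ`. -/
def sphSpan (φ : G → ℂ) : Submodule ℂ (G → ℂ) :=
  Submodule.span ℂ (Set.range fun g : G => translate g φ)

/-- A submodule of functions on `G` invariant under all left translations. -/
def IsInvariantSub {A : Type} [AddCommGroup A] [Module ℂ A] (p : Submodule ℂ (G → A)) : Prop :=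
  ∀ h : G, ∀ f ∈ p, translate h f ∈ p

/-- `p` is an irreducible `G`-invariant subspace of the induced representation. -/
def IsIrredSubOfInd (p : Submodule ℂ (G → V)) : Prop :=
  p ≤ ind K θ ∧ IsInvariantSub p ∧ p ≠ ⊥ ∧
    ∀ q : Submodule ℂ (G → V), q ≤ p → IsInvariantSub q → q = ⊥ ∨ q = p

/-! ### Auxiliary lemmas for Statement 0 -/

lemma hecke_mul_right {F : G → (V →ₗ[ℂ] V)} (hF : IsHecke K θ F) (g : G) (k : K) :
    F (g * (k : G)) = (θ k⁻¹).toLinearMap ∘ₗ F g := by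
  have h := hF g 1 k
  simpa using h

lemma hecke_mul_left {F : G → (V →ₗ[ℂ] V)} (hF : IsHecke K θ F) (g : G) (k : K) :
    F ((k : G) * g) = F g ∘ₗ (θ k⁻¹).toLinearMap := by
  have h := hF g k 1
  simpa using h

lemma xiFun_mem_ind {F : G → (V →ₗ[ℂ] V)} (hF : IsHecke K θ F) (f : G → V) :
    xiFun F f ∈ ind K θ := by
  intro g k
  have hterm : ∀ h : G, F (h⁻¹ * (g * (k : G))) (f h) = θ k⁻¹ (F (h⁻¹ * g) (f h)) := by
    intro h
    rw [← mul_assoc, hecke_mul_right K θ hF]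
    rfl
  show ∑ h : G, F (h⁻¹ * (g * (k : G))) (f h) = θ k⁻¹ (∑ h : G, F (h⁻¹ * g) (f h))
  rw [map_sum]
  exact Finset.sum_congr rfl fun h _ => hterm h

lemma xiFun_translate' (F : G → (V →ₗ[ℂ] V)) (h : G) (f : G → V) :
    xiFun F (translate h f) = translate h (xiFun F f) := by
  funext g
  show ∑ x : G, F (x⁻¹ * g) (f (h⁻¹ * x)) = ∑ x : G, F (x⁻¹ * (h⁻¹ * g)) (f x)
  refine (Fintype.sum_equiv (Equiv.mulLeft h) _ _ fun x => ?_).symm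
  simp [mul_assoc, mul_inv_rev]

lemma xiFun_conv' (F₁ F₂ : G → (V →ₗ[ℂ] V)) (f : G → V) :
    xiFun (heckeConv F₁ F₂) f = xiFun F₁ (xiFun F₂ f) := by
  funext g
  show ∑ h : G, (∑ u : G, F₁ (u⁻¹ * (h⁻¹ * g)) ∘ₗ F₂ u) (f h)
      = ∑ u : G, F₁ (u⁻¹ * g) (∑ h : G, F₂ (h⁻¹ * u) (f h))
  simp only [LinearMap.coe_sum, Finset.sum_apply, LinearMap.comp_apply, map_sum]
  conv_rhs => rw [Finset.sum_comm]
  refine Finset.sum_congr rfl fun h _ => ?_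
  refine Fintype.sum_equiv (Equiv.mulLeft h) _ _ fun u => ?_
  simp [mul_assoc, mul_inv_rev, inv_mul_cancel_left]

lemma xiFun_adjoint' (F : G → (V →ₗ[ℂ] V)) (f₁ f₂ : G → V) :
    innerInd K (xiFun F f₁) f₂ = innerInd K f₁ (xiFun (heckeStar F) f₂) := by
  unfold innerInd xiFun heckeStar
  congr 1
  simp only [inner_sum, sum_inner, LinearMap.adjoint_inner_left, mul_inv_rev, inv_inv]
  rw [Finset.sum_comm]

lemma sum_if_mem {M : Type} [AddCommMonoid M] (x : M) :
    (∑ h : G, if h ∈ K then x else 0) = Nat.card K • x := by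
  rw [← Finset.sum_filter, Finset.sum_const, Nat.card_eq_fintype_card]
  congr 1
  rw [Fintype.card_subtype]

/-- The generating vectors `f_v ∈ Ind_K^G V`: `f_v g = θ g⁻¹ v` if `g ∈ K`, `0` otherwise. -/
def fV (v : V) : G → V := fun g => if h : g ∈ K then θ (⟨g, h⟩ : K)⁻¹ v else 0

lemma fV_mem (v : V) : fV K θ v ∈ ind K θ := by
  intro g k
  by_cases hg : g ∈ K
  · have hgk : g * (k : G) ∈ K := K.mul_mem hg k.2
    have hsub : (⟨g * (k : G), hgk⟩ : K) = ⟨g, hg⟩ * k := rfl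
    simp only [fV, dif_pos hg, dif_pos hgk, hsub, mul_inv_rev, map_mul]
    rfl
  · have hgk : g * (k : G) ∉ K := by
      intro hmem
      exact hg (by simpa using K.mul_mem hmem (K.inv_mem k.2))
    simp [fV, dif_neg hg, dif_neg hgk]

lemma fV_smul_left (k : K) (v : V) (x : G) :
    fV K θ v ((k : G) * x) = fV K θ (θ k⁻¹ v) x := by
  by_cases hx : x ∈ K
  · have hkx : (k : G) * x ∈ K := K.mul_mem k.2 hx
    have hsub : (⟨(k : G) * x, hkx⟩ : K) = k * ⟨x, hx⟩ := rfl
    simp only [fV, dif_pos hx, dif_pos hkx, hsub, mul_inv_rev, map_mul]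
    rfl
  · have hkx : (k : G) * x ∉ K := by
      intro hmem
      exact hx (by simpa using K.mul_mem (K.inv_mem k.2) hmem)
    simp [fV, dif_neg hx, dif_neg hkx]

/-- `v ↦ f_v` as a linear map into the induced space. -/
def fVL : V →ₗ[ℂ] ↥(ind K θ) where
  toFun v := ⟨fV K θ v, fV_mem K θ v⟩
  map_add' v w := by
    apply Subtype.ext; funext g; by_cases h : g ∈ K <;> simp [fV, h]
  map_smul' c v := by
    apply Subtype.ext; funext g; by_cases h : g ∈ K <;> simp [fV, h]

lemma xiFun_fV {F : G → (V →ₗ[ℂ] V)} (hF : IsHecke K θ F) (v : V) (g : G) :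
    xiFun F (fV K θ v) g = Nat.card K • F g v := by
  have hterm : ∀ h : G, F (h⁻¹ * g) (fV K θ v h) = if h ∈ K then F g v else 0 := by
    intro h
    by_cases hh : h ∈ K
    · have hinv : h⁻¹ = ((⟨h, hh⟩ : K)⁻¹ : K) := rfl
      rw [if_pos hh, fV, dif_pos hh, hinv, hecke_mul_left K θ hF, inv_inv]
      show F g (θ (⟨h, hh⟩ : K) (θ (⟨h, hh⟩ : K)⁻¹ v)) = F g v
      rw [map_inv]
      exact congrArg (F g) ((θ (⟨h, hh⟩ : K)).apply_symm_apply v)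
    · rw [if_neg hh, fV, dif_neg hh, map_zero]
  rw [xiFun]
  simp only [hterm]
  exact sum_if_mem K (F g v)

/-- The kernel operator attached to a matrix-valued kernel `M : G × G → End V`. -/
def kerMap (M : G → G → (V →ₗ[ℂ] V)) : (G → V) →ₗ[ℂ] (G → V) where
  toFun f := fun g => ∑ h : G, M g h (f h)
  map_add' f₁ f₂ := by funext g; simp [Finset.sum_add_distrib]
  map_smul' c f := by funext g; simp [Finset.smul_sum]

lemma trace_kerMap (M : G → G → (V →ₗ[ℂ] V)) :
    LinearMap.trace ℂ (G → V) (kerMap M) = ∑ g : G, LinearMap.trace ℂ V (M g g) := by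
  classical
  set b := Module.finBasis ℂ V with hb
  let pb : Module.Basis ((_ : G) × Fin (Module.finrank ℂ V)) ℂ (G → V) := Pi.basis fun _ => b
  rw [LinearMap.trace_eq_matrix_trace ℂ pb, Matrix.trace, ← Finset.univ_sigma_univ,
    Finset.sum_sigma]
  refine Finset.sum_congr rfl fun g _ => ?_
  rw [LinearMap.trace_eq_matrix_trace ℂ b, Matrix.trace]
  refine Finset.sum_congr rfl fun i _ => ?_
  simp only [Matrix.diag_apply, LinearMap.toMatrix_apply, Pi.basis_apply, Pi.basis_repr, pb]
  have hker : (kerMap M) (Pi.single (M := fun _ : G => V) g (b i)) g = M g g (b i) := by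
    show (∑ h : G, M g h (Pi.single (M := fun _ : G => V) g (b i) h)) = M g g (b i)
    rw [Finset.sum_eq_single g]
    · rw [Pi.single_eq_same]
    · intro h _ hne
      rw [Pi.single_eq_of_ne hne, map_zero]
    · intro hg
      exact absurd (Finset.mem_univ g) hg
  rw [hker]

lemma cardK_ne_zero : (Nat.card ↥K : ℂ) ≠ 0 := by
  have : 0 < Nat.card ↥K := Nat.card_pos
  exact_mod_cast this.ne'

lemma fV_coe (k : K) (v : V) : fV K θ v (k : G) = θ k⁻¹ v := by
  show (if h : (k : G) ∈ K then θ (⟨(k : G), h⟩ : K)⁻¹ v else 0) = θ k⁻¹ v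
  rw [dif_pos k.2]

/-- The averaging projection onto the induced space. -/
def avgFun (f : G → V) : G → V :=
  fun g => (Nat.card ↥K : ℂ)⁻¹ • ∑ k : K, θ k (f (g * (k : G)))

lemma avgFun_mem (f : G → V) : avgFun K θ f ∈ ind K θ := by
  intro g k₀
  show (Nat.card ↥K : ℂ)⁻¹ • ∑ k : K, θ k (f (g * (k₀ : G) * (k : G)))
      = θ k₀⁻¹ ((Nat.card ↥K : ℂ)⁻¹ • ∑ k : K, θ k (f (g * (k : G))))
  rw [map_smul, map_sum]
  congr 1
  refine Fintype.sum_equiv (Equiv.mulLeft k₀) _ _ fun k => ?_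
  show θ k (f (g * (k₀ : G) * (k : G))) = θ k₀⁻¹ (θ (k₀ * k) (f (g * ((k₀ * k : K) : G))))
  rw [Subgroup.coe_mul, ← mul_assoc, map_inv, map_mul]
  exact ((θ k₀).symm_apply_apply _).symm

lemma avgFun_eq_self {f : G → V} (hf : f ∈ ind K θ) : avgFun K θ f = f := by
  funext g
  show (Nat.card ↥K : ℂ)⁻¹ • ∑ k : K, θ k (f (g * (k : G))) = f g
  have hterm : ∀ k : K, θ k (f (g * (k : G))) = f g := by
    intro k
    rw [hf g k, map_inv]
    exact (θ k).apply_symm_apply _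
  simp only [hterm]
  rw [Finset.sum_const, Finset.card_univ, ← Nat.cast_smul_eq_nsmul ℂ, smul_smul,
    ← Nat.card_eq_fintype_card, inv_mul_cancel₀ (cardK_ne_zero K), one_smul]

/-- The averaging projection as a linear map onto the induced space. -/
def projInd : (G → V) →ₗ[ℂ] ↥(ind K θ) where
  toFun f := ⟨avgFun K θ f, avgFun_mem K θ f⟩
  map_add' f₁ f₂ := by
    apply Subtype.ext; funext g
    simp [avgFun, Finset.sum_add_distrib, smul_add]
  map_smul' c f := by
    apply Subtype.ext; funext g
    simp [avgFun, Finset.smul_sum, smul_comm c]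

lemma xiFun_avg {F : G → (V →ₗ[ℂ] V)} (hF : IsHecke K θ F) (f : G → V) :
    xiFun F (avgFun K θ f) = xiFun F f := by
  funext g
  show ∑ h : G, F (h⁻¹ * g) ((Nat.card ↥K : ℂ)⁻¹ • ∑ k : K, θ k (f (h * (k : G))))
      = ∑ h : G, F (h⁻¹ * g) (f h)
  have hterm : ∀ h : G, F (h⁻¹ * g) ((Nat.card ↥K : ℂ)⁻¹ • ∑ k : K, θ k (f (h * (k : G))))
      = (Nat.card ↥K : ℂ)⁻¹ • ∑ k : K, F ((h * (k : G))⁻¹ * g) (f (h * (k : G))) := by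
    intro h
    rw [map_smul, map_sum]
    congr 1
    refine Finset.sum_congr rfl fun k _ => ?_
    have hcomp : F ((k : G)⁻¹ * (h⁻¹ * g)) = F (h⁻¹ * g) ∘ₗ (θ k).toLinearMap := by
      have h' := hecke_mul_left K θ hF (h⁻¹ * g) k⁻¹
      simpa using h'
    have h2 : F (h⁻¹ * g) (θ k (f (h * (k : G)))) = F ((k : G)⁻¹ * (h⁻¹ * g)) (f (h * (k : G))) := by
      rw [hcomp]; rfl
    rw [h2]
    congr 2
    rw [mul_inv_rev, mul_assoc]
  simp only [hterm]
  rw [← Finset.smul_sum, Finset.sum_comm]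
  have hinner : ∀ k : K, (∑ h : G, F ((h * (k : G))⁻¹ * g) (f (h * (k : G))))
      = ∑ h : G, F (h⁻¹ * g) (f h) := by
    intro k
    exact Fintype.sum_equiv (Equiv.mulRight (k : G)) _ _ fun h => rfl
  simp only [hinner]
  rw [Finset.sum_const, Finset.card_univ, ← Nat.cast_smul_eq_nsmul ℂ, smul_smul,
    ← Nat.card_eq_fintype_card, inv_mul_cancel₀ (cardK_ne_zero K), one_smul]

lemma ind_decomp (f : ↥(ind K θ)) :
    f = (Nat.card ↥K : ℂ)⁻¹ • ∑ h : G, lamL K θ h (fVL K θ ((f : G → V) h)) := by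
  apply Subtype.ext
  funext g
  have hcoe : ((((Nat.card ↥K : ℂ)⁻¹ • ∑ h : G, lamL K θ h (fVL K θ ((f : G → V) h))) :
      ↥(ind K θ)) : G → V) g
      = (Nat.card ↥K : ℂ)⁻¹ • ∑ h : G, fV K θ ((f : G → V) h) (h⁻¹ * g) := by
    rw [Submodule.coe_smul, Pi.smul_apply, AddSubmonoidClass.coe_finset_sum, Finset.sum_apply]
    rfl
  rw [hcoe]
  have key : ∀ h : G, fV K θ ((f : G → V) h) (h⁻¹ * g)
      = if h⁻¹ * g ∈ K then (f : G → V) g else 0 := by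
    intro h
    by_cases hk : h⁻¹ * g ∈ K
    · rw [if_pos hk]
      set k : K := ⟨h⁻¹ * g, hk⟩ with hkdef
      have hh : h = g * ((k⁻¹ : K) : G) := by
        show h = g * (h⁻¹ * g)⁻¹
        rw [mul_inv_rev, inv_inv, mul_inv_cancel_left]
      have hfh : (f : G → V) h = θ k ((f : G → V) g) := by
        conv_lhs => rw [hh]
        rw [f.2 g k⁻¹, inv_inv]
      have hkg : h⁻¹ * g = (k : G) := rfl
      rw [hfh, hkg, fV_coe, map_inv]
      exact (θ k).symm_apply_apply _
    · rw [if_neg hk]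
      show (if h' : h⁻¹ * g ∈ K then θ (⟨h⁻¹ * g, h'⟩ : K)⁻¹ ((f : G → V) h) else 0) = 0
      rw [dif_neg hk]
  simp only [key]
  have hsum : (∑ h : G, if h⁻¹ * g ∈ K then (f : G → V) g else 0)
      = Nat.card ↥K • (f : G → V) g := by
    refine Eq.trans (Fintype.sum_equiv ((Equiv.inv G).trans (Equiv.mulRight g))
      (fun h => if h⁻¹ * g ∈ K then (f : G → V) g else 0)
      (fun u => if u ∈ K then (f : G → V) g else 0)
      fun h => rfl) ?_
    exact sum_if_mem K _
  rw [hsum, ← Nat.cast_smul_eq_nsmul ℂ, smul_smul, inv_mul_cancel₀ (cardK_ne_zero K), one_smul]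

lemma subtype_comp_projInd :
    (ind K θ).subtype ∘ₗ projInd K θ
      = kerMap (fun g h => (Nat.card ↥K : ℂ)⁻¹ •
          ∑ k : K, if h = g * (k : G) then (θ k).toLinearMap else 0) := by
  apply LinearMap.ext; intro f; funext g
  show avgFun K θ f g = ∑ h : G, ((Nat.card ↥K : ℂ)⁻¹ •
      ∑ k : K, if h = g * (k : G) then (θ k).toLinearMap else 0) (f h)
  have hterm : ∀ h : G, ((Nat.card ↥K : ℂ)⁻¹ •
      ∑ k : K, if h = g * (k : G) then (θ k).toLinearMap else 0) (f h)
      = (Nat.card ↥K : ℂ)⁻¹ • ∑ k : K, (if h = g * (k : G) then θ k (f h) else 0) := by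
    intro h
    rw [LinearMap.smul_apply, LinearMap.coe_sum, Finset.sum_apply]
    congr 1
    refine Finset.sum_congr rfl fun k _ => ?_
    split <;> simp
  simp only [hterm]
  rw [← Finset.smul_sum, Finset.sum_comm]
  show avgFun K θ f g = _
  rw [avgFun]
  congr 1
  refine Finset.sum_congr rfl fun k _ => ?_
  rw [Finset.sum_ite_eq' Finset.univ (g * (k : G)) (fun h => θ k (f h))]
  simp

lemma finrank_ind_eq : (Module.finrank ℂ ↥(ind K θ) : ℂ)
    = (Fintype.card G : ℂ) * ((Nat.card ↥K : ℂ)⁻¹ * (Module.finrank ℂ V : ℂ)) := by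
  have h0 : (LinearMap.id : ↥(ind K θ) →ₗ[ℂ] ↥(ind K θ))
      = projInd K θ ∘ₗ (ind K θ).subtype := by
    apply LinearMap.ext; intro f
    exact (Subtype.ext (avgFun_eq_self K θ f.2)).symm
  rw [← LinearMap.trace_id ℂ ↥(ind K θ), h0, LinearMap.trace_comp_comm',
    subtype_comp_projInd, trace_kerMap]
  have hdiag : ∀ g : G, LinearMap.trace ℂ V ((Nat.card ↥K : ℂ)⁻¹ •
      ∑ k : K, if g = g * (k : G) then (θ k).toLinearMap else 0)
      = (Nat.card ↥K : ℂ)⁻¹ * (Module.finrank ℂ V : ℂ) := by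
    intro g
    have h1 : (∑ k : K, if g = g * (k : G) then (θ k).toLinearMap else 0)
        = (θ 1).toLinearMap := by
      have h2 : ∀ k : K, (if g = g * (k : G) then (θ k).toLinearMap else 0)
          = (if k = 1 then (θ k).toLinearMap else 0) := by
        intro k
        congr 1
        simp [left_eq_mul]
      simp only [h2]
      rw [Finset.sum_ite_eq' Finset.univ (1 : K) (fun k => (θ k).toLinearMap)]
      simp
    rw [map_smul, h1, map_one, smul_eq_mul]
    congr 1
    exact LinearMap.trace_id ℂ V
  simp only [hdiag]
  rw [Finset.sum_const, Finset.card_univ, nsmul_eq_mul]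

/-- Mackey's formula for invariants: the map
`ξ : ~H(G,K,θ) → End(Ind_K^G V)`, `(ξ F) f g = ∑ h, F (h⁻¹ g) (f h)`, maps the Hecke algebra
onto the commutant `End_G(Ind_K^G V)`, is a bijective ∗-algebra isomorphism, and satisfies
`⟨ξ F₁, ξ F₂⟩ = |K| ⟨F₁, F₂⟩` for the normalized Hilbert-Schmidt inner product. -/
theorem statement0 (K : Subgroup G) (θ : ↥K →* (V ≃ₗ[ℂ] V))
    (hu : IsUnitaryRep θ) (hirr : IsIrreducibleRep θ) :
    -- ξ(F) preserves the induced space and commutes with the G-action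
    (∀ F : G → (V →ₗ[ℂ] V), IsHecke K θ F →
      (∀ f ∈ ind K θ, xiFun F f ∈ ind K θ) ∧
      (∀ (h : G), ∀ f ∈ ind K θ, xiFun F (translate h f) = translate h (xiFun F f))) ∧
    -- ξ is ℂ-linear
    (∀ (F₁ F₂ : G → (V →ₗ[ℂ] V)) (f : G → V), xiFun (F₁ + F₂) f = xiFun F₁ f + xiFun F₂ f) ∧
    (∀ (c : ℂ) (F : G → (V →ₗ[ℂ] V)) (f : G → V), xiFun (c • F) f = c • xiFun F f) ∧
    -- ξ transforms convolution into composition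
    (∀ F₁ F₂ : G → (V →ₗ[ℂ] V), IsHecke K θ F₁ → IsHecke K θ F₂ →
      ∀ f : G → V, xiFun (heckeConv F₁ F₂) f = xiFun F₁ (xiFun F₂ f)) ∧
    -- ξ(F*) is the adjoint of ξ(F) with respect to the inner product of `Ind_K^G V`
    (∀ F : G → (V →ₗ[ℂ] V), IsHecke K θ F → ∀ f₁ ∈ ind K θ, ∀ f₂ ∈ ind K θ,
      innerInd K (xiFun F f₁) f₂ = innerInd K f₁ (xiFun (heckeStar F) f₂)) ∧
    -- ξ is injective on the Hecke algebra
    (∀ F₁ F₂ : G → (V →ₗ[ℂ] V), IsHecke K θ F₁ → IsHecke K θ F₂ →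
      (∀ f ∈ ind K θ, xiFun F₁ f = xiFun F₂ f) → F₁ = F₂) ∧
    -- ξ is surjective onto the commutant
    (∀ T : ↥(ind K θ) →ₗ[ℂ] ↥(ind K θ),
      (∀ (h : G) (f : ↥(ind K θ)), T (lamL K θ h f) = lamL K θ h (T f)) →
      ∃ F : G → (V →ₗ[ℂ] V), IsHecke K θ F ∧ ∀ f : ↥(ind K θ), (T f : G → V) = xiFun F ↑f) ∧
    -- ⟨ξ F₁, ξ F₂⟩ = |K| ⟨F₁, F₂⟩, where the left hand side is the normalized Hilbert-Schmidt
    -- inner product `tr((ξ F₂)* ∘ (ξ F₁)) / dim (Ind_K^G V)` (the adjoint `(ξ F₂)*` being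
    -- computed as `ξ (F₂*)`, by the adjoint property above)
    (∀ F₁ F₂ : G → (V →ₗ[ℂ] V), IsHecke K θ F₁ → IsHecke K θ F₂ →
      ∀ hmem : ∀ f ∈ ind K θ, (xiL (heckeStar F₂) ∘ₗ xiL F₁) f ∈ ind K θ,
        (Module.finrank ℂ ↥(ind K θ) : ℂ)⁻¹ *
            LinearMap.trace ℂ ↥(ind K θ) ((xiL (heckeStar F₂) ∘ₗ xiL F₁).restrict hmem) =
          (Nat.card K : ℂ) * heckeInner F₁ F₂) := by
  have hV : Nontrivial V := by
    by_contra h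
    rw [not_nontrivial_iff_subsingleton] at h
    exact hirr.1 (Subsingleton.elim _ _)
  refine ⟨?_, ?_, ?_, ?_, ?_, ?_, ?_, ?_⟩
  · -- ξ(F) preserves the induced space and commutes with the G-action
    intro F hF
    exact ⟨fun f _ => xiFun_mem_ind K θ hF f, fun h f _ => xiFun_translate' F h f⟩
  · -- additivity
    intro F₁ F₂ f
    funext g
    simp [xiFun, Finset.sum_add_distrib]
  · -- homogeneity
    intro c F f
    funext g
    simp [xiFun, Finset.smul_sum]
  · -- convolution
    intro F₁ F₂ _ _ f
    exact xiFun_conv' F₁ F₂ f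
  · -- adjoint
    intro F _ f₁ _ f₂ _
    exact xiFun_adjoint' K F f₁ f₂
  · -- injectivity
    intro F₁ F₂ h₁ h₂ heq
    funext g
    apply LinearMap.ext
    intro v
    have h := congrFun (heq (fV K θ v) (fV_mem K θ v)) g
    rw [xiFun_fV K θ h₁, xiFun_fV K θ h₂, ← Nat.cast_smul_eq_nsmul ℂ,
      ← Nat.cast_smul_eq_nsmul ℂ] at h
    exact smul_right_injective V (cardK_ne_zero K) h
  · -- surjectivity onto the commutant
    intro T hT
    set c : ℂ := (Nat.card ↥K : ℂ)⁻¹ with hc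
    set FF : G → (V →ₗ[ℂ] V) := fun g =>
      c • ((LinearMap.proj g ∘ₗ (ind K θ).subtype) ∘ₗ (T ∘ₗ fVL K θ)) with hFF
    have hFFapp : ∀ (g : G) (v : V), FF g v = c • ((T (fVL K θ v) : G → V) g) :=
      fun g v => rfl
    have hTval : ∀ (v : V) (k₁ : K) (x : G),
        (T (fVL K θ v) : G → V) ((k₁ : G) * x) = (T (fVL K θ (θ k₁⁻¹ v)) : G → V) x := by
      intro v k₁ x
      have h1 : lamL K θ ((k₁ : G)⁻¹) (fVL K θ v) = fVL K θ (θ k₁⁻¹ v) := by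
        apply Subtype.ext
        funext y
        show fV K θ v (((k₁ : G)⁻¹)⁻¹ * y) = fV K θ (θ k₁⁻¹ v) y
        rw [inv_inv]
        exact fV_smul_left K θ k₁ v y
      have h2 := congrArg (fun (u : ↥(ind K θ)) => (u : G → V) x)
        (hT ((k₁ : G)⁻¹) (fVL K θ v))
      rw [h1] at h2
      have h3 : ((lamL K θ ((k₁ : G)⁻¹) (T (fVL K θ v))) : G → V) x
          = (T (fVL K θ v) : G → V) ((k₁ : G) * x) := by
        show (T (fVL K θ v) : G → V) (((k₁ : G)⁻¹)⁻¹ * x) = _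
        rw [inv_inv]
      exact (h2.trans h3).symm
    have hHecke : IsHecke K θ FF := by
      intro g k₁ k₂
      apply LinearMap.ext
      intro v
      show FF ((k₁ : G) * g * (k₂ : G)) v = θ k₂⁻¹ (FF g (θ k₁⁻¹ v))
      rw [hFFapp, hFFapp]
      have hind := (T (fVL K θ v)).2 ((k₁ : G) * g) k₂
      rw [hind, hTval v k₁ g, map_smul]
    refine ⟨FF, hHecke, fun f => ?_⟩
    have hTf : T f = c • ∑ h : G, lamL K θ h (T (fVL K θ ((f : G → V) h))) := by
      conv_lhs => rw [ind_decomp K θ f]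
      rw [map_smul, map_sum]
      congr 1
      exact Finset.sum_congr rfl fun h _ => hT h _
    rw [hTf]
    funext g
    rw [Submodule.coe_smul, Pi.smul_apply, AddSubmonoidClass.coe_finset_sum,
      Finset.sum_apply, Finset.smul_sum]
    refine Finset.sum_congr rfl fun h _ => ?_
    rw [hFFapp]
    rfl
  · -- the Hilbert-Schmidt inner product identity
    intro F₁ F₂ h₁ h₂ hmem
    set A := xiL (heckeStar F₂) ∘ₗ xiL F₁ with hA
    have hAker : A = kerMap (fun g h => heckeConv (heckeStar F₂) F₁ (h⁻¹ * g)) := by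
      apply LinearMap.ext; intro f; funext g
      exact (congrFun (xiFun_conv' (heckeStar F₂) F₁ f) g).symm
    have hproj : A ∘ₗ ((ind K θ).subtype ∘ₗ projInd K θ) = A := by
      have hx : xiL F₁ ∘ₗ ((ind K θ).subtype ∘ₗ projInd K θ) = xiL F₁ := by
        apply LinearMap.ext; intro f
        exact xiFun_avg K θ h₁ f
      rw [hA, LinearMap.comp_assoc, hx]
    have hfact : (ind K θ).subtype ∘ₗ ((A.restrict hmem) ∘ₗ projInd K θ) = A := by
      apply LinearMap.ext
      intro f
      show ((A.restrict hmem) (projInd K θ f) : G → V) = A f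
      rw [LinearMap.restrict_coe_apply]
      exact LinearMap.congr_fun hproj f
    have htr : LinearMap.trace ℂ ↥(ind K θ) (A.restrict hmem)
        = LinearMap.trace ℂ (G → V) A := by
      conv_rhs => rw [← hfact]
      rw [LinearMap.trace_comp_comm']
      congr 1
      apply LinearMap.ext
      intro f
      show (A.restrict hmem) f = (A.restrict hmem) (projInd K θ ((f : G → V)))
      congr 1
      exact (Subtype.ext (avgFun_eq_self K θ f.2)).symm
    have htrA : LinearMap.trace ℂ (G → V) A
        = (Fintype.card G : ℂ)
          * ∑ h : G, LinearMap.trace ℂ V (LinearMap.adjoint (F₂ h) ∘ₗ F₁ h) := by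
      rw [hAker, trace_kerMap]
      have hH1 : ∀ g : G, heckeConv (heckeStar F₂) F₁ (g⁻¹ * g)
          = ∑ h : G, LinearMap.adjoint (F₂ h) ∘ₗ F₁ h := by
        intro g
        rw [inv_mul_cancel]
        unfold heckeConv heckeStar
        refine Finset.sum_congr rfl fun h _ => ?_
        rw [mul_one, inv_inv]
      simp only [hH1]
      rw [Finset.sum_const, Finset.card_univ, nsmul_eq_mul, map_sum]
    rw [htr, htrA, finrank_ind_eq K θ]
    unfold heckeInner
    rw [← Finset.mul_sum]
    have hG0 : (Fintype.card G : ℂ) ≠ 0 := by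
      exact_mod_cast Fintype.card_ne_zero
    have hd0 : (Module.finrank ℂ V : ℂ) ≠ 0 := by
      have : 0 < Module.finrank ℂ V := Module.finrank_pos
      exact_mod_cast this.ne'
    field_simp

end MFT
end
end

section
/- (1) The map T_v : Ind_K^G V → L(G) defined by (T_v f)(g) = √(d_θ/|K|)·⟨f(g), v⟩_V is a G-equivariant linear isometry of Ind_K^G V into L(G) equipped with the left regular representation; in particular its image I(G,K,ψ) := T_v(Ind_K^G V) is a G-invariant subspace of L(G) that is G-isomorphic to Ind_K^G V. (2) The function ψ satisfies ψ*ψ = ψ and ψ* = ψ, and the operator P : L(G) → L(G), Pf = f*ψ, is the orthogonal projection of L(G) onto I(G,K,ψ); consequently I(G,K,ψ) = {f*ψ : f ∈ L(G)} = {f ∈ L(G) : f*ψ = f}. -/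
open scoped BigOperators ComplexConjugate Classical

set_option linter.unusedSectionVars false
set_option synthInstance.maxHeartbeats 1000000
set_option maxHeartbeats 1000000

noncomputable section

namespace MFT

variable {G : Type} [Group G] [Fintype G]
variable {V : Type} [NormedAddCommGroup V] [InnerProductSpace ℂ V] [FiniteDimensional ℂ V]

variable (K : Subgroup G) (θ : ↥K →* (V ≃ₗ[ℂ] V))

section Aux

lemma nontrivial_of_irr (hirr : IsIrreducibleRep θ) : Nontrivial V := by
  by_contra h
  rw [not_nontrivial_iff_subsingleton] at h
  exact hirr.1 (Subsingleton.elim _ _)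

lemma schur (hirr : IsIrreducibleRep θ) (T : V →ₗ[ℂ] V)
    (hT : ∀ (k : K) (x : V), T (θ k x) = θ k (T x)) :
    ∃ c : ℂ, ∀ x, T x = c • x := by
  haveI := nontrivial_of_irr K θ hirr
  obtain ⟨c, hc⟩ := Module.End.exists_eigenvalue (T : Module.End ℂ V)
  refine ⟨c, ?_⟩
  set p : Submodule ℂ V := Module.End.eigenspace (T : Module.End ℂ V) c with hp
  have hinv : ∀ (k : K) (x : V), x ∈ p → θ k x ∈ p := by
    intro k x hx
    rw [Module.End.mem_eigenspace_iff] at hx ⊢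
    show T (θ k x) = c • θ k x
    rw [hT k x, hx, map_smul]
  rcases hirr.2 p hinv with h | h
  · exact absurd h hc
  · intro x
    have : x ∈ p := h ▸ Submodule.mem_top
    rwa [Module.End.mem_eigenspace_iff] at this

lemma inner_theta_inv_right (hu : IsUnitaryRep θ) (k : K) (x y : V) :
    (inner ℂ x ((θ k)⁻¹ y) : ℂ) = inner ℂ (θ k x) y := by
  have h := hu k x ((θ k)⁻¹ y)
  have h2 : θ k ((θ k)⁻¹ y) = y := by
    have : θ k ((θ k)⁻¹ y) = (θ k * (θ k)⁻¹) y := rfl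
    rw [this, mul_inv_cancel]; rfl
  rw [h2] at h; exact h.symm

lemma inner_theta_inv_left (hu : IsUnitaryRep θ) (k : K) (x y : V) :
    (inner ℂ ((θ k)⁻¹ x) y : ℂ) = inner ℂ x (θ k y) := by
  have h := hu k ((θ k)⁻¹ x) y
  have h2 : θ k ((θ k)⁻¹ x) = x := by
    have : θ k ((θ k)⁻¹ x) = (θ k * (θ k)⁻¹) x := rfl
    rw [this, mul_inv_cancel]; rfl
  rw [h2] at h; exact h.symm

/-- The key Schur orthogonality consequence. -/
lemma key_orth (hu : IsUnitaryRep θ) (hirr : IsIrreducibleRep θ) (v : V) (hv : ‖v‖ = 1)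
    (x y : V) :
    ∑ k : K, (inner ℂ (θ k v) x : ℂ) * inner ℂ y (θ k v) =
      (Fintype.card K : ℂ) / (Module.finrank ℂ V : ℂ) * inner ℂ y x := by
  haveI := nontrivial_of_irr K θ hirr
  set T : V →ₗ[ℂ] V :=
    { toFun := fun x => ∑ k : K, (inner ℂ (θ k v) x : ℂ) • (θ k v),
      map_add' := by intro a b; simp [inner_add_right, add_smul, Finset.sum_add_distrib],
      map_smul' := by intro c a; simp [inner_smul_right, mul_smul, Finset.smul_sum] } with hTdef
  have hTapp : ∀ z, T z = ∑ k : K, (inner ℂ (θ k v) z : ℂ) • (θ k v) := fun z => rfl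
  have hcomm : ∀ (k₀ : K) (z : V), T (θ k₀ z) = θ k₀ (T z) := by
    intro k₀ z
    rw [hTapp, hTapp, map_sum]
    refine Fintype.sum_equiv (Equiv.mulLeft k₀).symm _ _ fun k => ?_
    have he : ((Equiv.mulLeft k₀).symm k) = k₀⁻¹ * k := rfl
    rw [he, map_smul]
    have h1 : θ k₀ (θ (k₀⁻¹ * k) v) = θ k v := by
      have : θ k₀ (θ (k₀⁻¹ * k) v) = (θ k₀ * θ (k₀⁻¹ * k)) v := rfl
      rw [this, ← map_mul, mul_inv_cancel_left]
    have h2 : (inner ℂ (θ k v) (θ k₀ z) : ℂ) = inner ℂ (θ (k₀⁻¹ * k) v) z := by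
      rw [← h1, hu k₀ (θ (k₀⁻¹ * k) v) z]
    rw [h2, h1]
  obtain ⟨c, hc⟩ := schur K θ hirr T hcomm
  have hvv : ∀ k : K, (inner ℂ (θ k v) (θ k v) : ℂ) = 1 := by
    intro k
    rw [hu k v v, inner_self_eq_norm_sq_to_K, hv]
    norm_num
  have hd : (0:ℕ) < Module.finrank ℂ V := Module.finrank_pos
  set b := stdOrthonormalBasis ℂ V
  have htrace : ∑ i, (inner ℂ (b i) (T (b i)) : ℂ) = (Fintype.card K : ℂ) := by
    have h1 : ∀ i, (inner ℂ (b i) (T (b i)) : ℂ)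
        = ∑ k : K, inner ℂ (b i) (θ k v) * inner ℂ (θ k v) (b i) := by
      intro i
      rw [hTapp, inner_sum]
      refine Finset.sum_congr rfl fun k _ => ?_
      rw [inner_smul_right]; ring
    simp only [h1]
    rw [Finset.sum_comm]
    have h2 : ∀ k : K, ∑ i, (inner ℂ (b i) (θ k v) : ℂ) * inner ℂ (θ k v) (b i) = 1 := by
      intro k
      rw [← hvv k]
      have := OrthonormalBasis.sum_inner_mul_inner b (θ k v) (θ k v)
      calc ∑ i, (inner ℂ (b i) (θ k v) : ℂ) * inner ℂ (θ k v) (b i)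
          = ∑ i, (inner ℂ (θ k v) (b i) : ℂ) * inner ℂ (b i) (θ k v) := by
            refine Finset.sum_congr rfl fun i _ => mul_comm _ _
        _ = inner ℂ (θ k v) (θ k v) := this
    simp [h2]
  have htrace2 : ∑ i, (inner ℂ (b i) (T (b i)) : ℂ) = c * (Module.finrank ℂ V : ℂ) := by
    have h1 : ∀ i, (inner ℂ (b i) (T (b i)) : ℂ) = c := by
      intro i
      rw [hc, inner_smul_right, inner_self_eq_norm_sq_to_K, b.orthonormal.1 i]
      norm_num
    simp [h1, mul_comm]
  have hcval : c = (Fintype.card K : ℂ) / (Module.finrank ℂ V : ℂ) := by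
    have hd0 : (Module.finrank ℂ V : ℂ) ≠ 0 := by exact_mod_cast hd.ne'
    rw [eq_div_iff hd0, ← htrace2, htrace]
  calc ∑ k : K, (inner ℂ (θ k v) x : ℂ) * inner ℂ y (θ k v)
      = inner ℂ y (T x) := by
        rw [hTapp, inner_sum]
        exact Finset.sum_congr rfl fun k _ => (inner_smul_right _ _ _).symm
    _ = c * inner ℂ y x := by rw [hc, inner_smul_right]
    _ = _ := by rw [hcval]

/-- Restricting a sum over `G` to `K` when the summand vanishes off `K`. -/
lemma sum_restrict_K {M : Type} [AddCommMonoid M] (F : G → M)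
    (h0 : ∀ g : G, g ∉ K → F g = 0) : ∑ g : G, F g = ∑ k : K, F k := by
  classical
  rw [← Finset.sum_filter_of_ne (s := (Finset.univ : Finset G)) (p := fun g => g ∈ K)
    (fun x _ hx => by by_contra hk; exact hx (h0 x hk))]
  exact Finset.sum_subtype (p := fun g => g ∈ K) _ (by simp) F

lemma psi_apply_mem (v : V) {g : G} (hg : g ∈ K) :
    psi K θ v g = ((Module.finrank ℂ V : ℂ) / (Nat.card K : ℂ)) * (inner ℂ (θ ⟨g, hg⟩ v) v : ℂ) :=
  dif_pos hg

lemma psi_apply_not_mem (v : V) {g : G} (hg : g ∉ K) : psi K θ v g = 0 := dif_neg hg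

lemma card_K_ne_zero : (Nat.card K : ℂ) ≠ 0 := by
  have : 0 < Nat.card K := Nat.card_pos
  exact_mod_cast this.ne'

lemma finrank_ne_zero (hirr : IsIrreducibleRep θ) : (Module.finrank ℂ V : ℂ) ≠ 0 := by
  haveI := nontrivial_of_irr K θ hirr
  have : 0 < Module.finrank ℂ V := Module.finrank_pos
  exact_mod_cast this.ne'

lemma natCard_eq : (Nat.card K : ℂ) = (Fintype.card K : ℂ) := by
  rw [Nat.card_eq_fintype_card]

/-- ψ ∗ ψ = ψ. -/
lemma psi_conv_psi (hu : IsUnitaryRep θ) (hirr : IsIrreducibleRep θ) (v : V) (hv : ‖v‖ = 1) :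
    convC (psi K θ v) (psi K θ v) = psi K θ v := by
  funext g
  have hN : (Fintype.card K : ℂ) ≠ 0 := by
    have : 0 < Fintype.card K := Fintype.card_pos
    exact_mod_cast this.ne'
  have hd := finrank_ne_zero K θ hirr
  show ∑ h : G, psi K θ v h * psi K θ v (h⁻¹ * g) = psi K θ v g
  rw [sum_restrict_K K (fun h => psi K θ v h * psi K θ v (h⁻¹ * g))
    (fun h hh => show psi K θ v h * psi K θ v (h⁻¹ * g) = 0 by
      rw [psi_apply_not_mem K θ v hh, zero_mul])]
  by_cases hg : g ∈ K
  · have hterm : ∀ k : K, psi K θ v k * psi K θ v ((k : G)⁻¹ * g)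
        = ((Module.finrank ℂ V : ℂ) / (Nat.card K : ℂ))
          * ((Module.finrank ℂ V : ℂ) / (Nat.card K : ℂ))
          * ((inner ℂ (θ k v) v : ℂ) * inner ℂ (θ ⟨g, hg⟩ v) (θ k v)) := by
      intro k
      have hmem : (k : G)⁻¹ * g ∈ K := K.mul_mem (K.inv_mem k.2) hg
      rw [psi_apply_mem K θ v k.2, psi_apply_mem K θ v hmem]
      have hsub : (⟨(k : G)⁻¹ * g, hmem⟩ : K) = k⁻¹ * ⟨g, hg⟩ := rfl
      have happ : θ (k⁻¹ * ⟨g, hg⟩) v = (θ k)⁻¹ (θ ⟨g, hg⟩ v) := by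
        rw [map_mul, map_inv]; rfl
      rw [hsub, happ, inner_theta_inv_left K θ hu k (θ ⟨g, hg⟩ v) v]
      simp only [Subtype.coe_eta]
      ring
    rw [Finset.sum_congr rfl (fun k _ => hterm k), ← Finset.mul_sum,
      key_orth K θ hu hirr v hv v (θ ⟨g, hg⟩ v), psi_apply_mem K θ v hg, natCard_eq K]
    field_simp
  · have hterm : ∀ k : K, psi K θ v k * psi K θ v ((k : G)⁻¹ * g) = 0 := by
      intro k
      have hmem : (k : G)⁻¹ * g ∉ K := by
        intro hmem
        exact hg (by simpa using K.mul_mem k.2 hmem)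
      rw [psi_apply_not_mem K θ v hmem, mul_zero]
    rw [Finset.sum_congr rfl (fun k _ => hterm k), psi_apply_not_mem K θ v hg]
    simp


lemma psi_star_eq (hu : IsUnitaryRep θ) (v : V) : starC (psi K θ v) = psi K θ v := by
  funext g
  show conj (psi K θ v g⁻¹) = psi K θ v g
  by_cases hg : g ∈ K
  · have hginv : g⁻¹ ∈ K := K.inv_mem hg
    rw [psi_apply_mem K θ v hginv, psi_apply_mem K θ v hg, map_mul, inner_conj_symm]
    congr 1
    · simp
    · have hsub : (⟨g⁻¹, hginv⟩ : K) = (⟨g, hg⟩ : K)⁻¹ := rfl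
      have happ : θ ((⟨g, hg⟩ : K)⁻¹) v = (θ (⟨g, hg⟩ : K))⁻¹ v := by rw [map_inv]
      rw [hsub, happ, inner_theta_inv_right K θ hu ⟨g, hg⟩ v v]
  · have hginv : g⁻¹ ∉ K := fun h => hg (by simpa using K.inv_mem h)
    rw [psi_apply_not_mem K θ v hginv, psi_apply_not_mem K θ v hg, map_zero]

lemma psi_conj (hu : IsUnitaryRep θ) (v : V) (x : G) :
    conj (psi K θ v x) = psi K θ v x⁻¹ := by
  have := congrFun (psi_star_eq K θ hu v) x⁻¹
  simpa [starC] using this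

lemma conv_selfadj (ψ : G → ℂ) (hψ : ∀ x : G, conj (ψ x) = ψ x⁻¹) (f₁ f₂ : G → ℂ) :
    innerC (convC f₁ ψ) f₂ = innerC f₁ (convC f₂ ψ) := by
  show ∑ g : G, (∑ h : G, f₁ h * ψ (h⁻¹ * g)) * conj (f₂ g)
      = ∑ g : G, f₁ g * conj (∑ h : G, f₂ h * ψ (h⁻¹ * g))
  calc ∑ g : G, (∑ h : G, f₁ h * ψ (h⁻¹ * g)) * conj (f₂ g)
      = ∑ g : G, ∑ h : G, f₁ h * ψ (h⁻¹ * g) * conj (f₂ g) := by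
        exact Finset.sum_congr rfl fun g _ => Finset.sum_mul _ _ _
    _ = ∑ h : G, ∑ g : G, f₁ h * ψ (h⁻¹ * g) * conj (f₂ g) := Finset.sum_comm
    _ = ∑ g : G, f₁ g * conj (∑ h : G, f₂ h * ψ (h⁻¹ * g)) := by
        refine Finset.sum_congr rfl fun h _ => ?_
        rw [map_sum, Finset.mul_sum]
        refine Finset.sum_congr rfl fun g _ => ?_
        rw [map_mul, hψ (g⁻¹ * h), mul_inv_rev, inv_inv]
        ring

lemma convC_assoc (a b c : G → ℂ) : convC (convC a b) c = convC a (convC b c) := by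
  funext x
  show ∑ h : G, (∑ h' : G, a h' * b (h'⁻¹ * h)) * c (h⁻¹ * x)
      = ∑ h : G, a h * ∑ h' : G, b h' * c (h'⁻¹ * (h⁻¹ * x))
  calc ∑ h : G, (∑ h' : G, a h' * b (h'⁻¹ * h)) * c (h⁻¹ * x)
      = ∑ h : G, ∑ h' : G, a h' * b (h'⁻¹ * h) * c (h⁻¹ * x) := by
        exact Finset.sum_congr rfl fun h _ => Finset.sum_mul _ _ _
    _ = ∑ h' : G, ∑ h : G, a h' * b (h'⁻¹ * h) * c (h⁻¹ * x) := Finset.sum_comm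
    _ = ∑ h : G, a h * ∑ h' : G, b h' * c (h'⁻¹ * (h⁻¹ * x)) := by
        refine Finset.sum_congr rfl fun h _ => ?_
        rw [Finset.mul_sum]
        refine Fintype.sum_equiv (Equiv.mulLeft h).symm _ _ fun y => ?_
        have he : ((Equiv.mulLeft h).symm y) = h⁻¹ * y := rfl
        rw [he]
        have h1 : (h⁻¹ * y)⁻¹ * (h⁻¹ * x) = y⁻¹ * x := by group
        rw [h1]
        ring

lemma sqrt_const_facts (hirr : IsIrreducibleRep θ) :
    ((Real.sqrt ((Module.finrank ℂ V : ℝ) / (Nat.card K : ℝ))) : ℂ) ≠ 0 ∧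
    ((Real.sqrt ((Module.finrank ℂ V : ℝ) / (Nat.card K : ℝ))) : ℂ) *
      ((Real.sqrt ((Module.finrank ℂ V : ℝ) / (Nat.card K : ℝ))) : ℂ)
      = (Module.finrank ℂ V : ℂ) / (Nat.card K : ℂ) := by
  haveI := nontrivial_of_irr K θ hirr
  have hd : 0 < Module.finrank ℂ V := Module.finrank_pos
  have hN : 0 < Nat.card K := Nat.card_pos
  have hpos : 0 < (Module.finrank ℂ V : ℝ) / (Nat.card K : ℝ) := by positivity
  constructor
  · simp only [ne_eq, Complex.ofReal_eq_zero]
    exact (Real.sqrt_pos.mpr hpos).ne'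
  · rw [← Complex.ofReal_mul, Real.mul_self_sqrt hpos.le]
    push_cast
    ring

/-- The isometry property of `T_v`. -/
lemma Tv_isometry (hu : IsUnitaryRep θ) (hirr : IsIrreducibleRep θ) (v : V) (hv : ‖v‖ = 1) :
    ∀ f₁ ∈ ind K θ, ∀ f₂ ∈ ind K θ, innerC (Tv K v f₁) (Tv K v f₂) = innerInd K f₁ f₂ := by
  intro f₁ hf₁ f₂ hf₂
  obtain ⟨hc0, hcc⟩ := sqrt_const_facts K θ hirr
  set c : ℂ := ((Real.sqrt ((Module.finrank ℂ V : ℝ) / (Nat.card K : ℝ))) : ℂ) with hcdef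
  have hcconj : conj c = c := Complex.conj_ofReal _
  have hN : (Fintype.card K : ℂ) ≠ 0 := by
    have : 0 < Fintype.card K := Fintype.card_pos
    exact_mod_cast this.ne'
  have hd := finrank_ne_zero K θ hirr
  set S : ℂ := ∑ g : G, (inner ℂ v (f₁ g) : ℂ) * inner ℂ (f₂ g) v with hSdef
  set T : ℂ := ∑ g : G, (inner ℂ (f₂ g) (f₁ g) : ℂ) with hTdef
  have hkey : (Fintype.card K : ℂ) * S = (Fintype.card K : ℂ) / (Module.finrank ℂ V : ℂ) * T := by
    calc (Fintype.card K : ℂ) * S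
        = ∑ _k : K, S := by rw [Finset.sum_const]; simp [mul_comm]
      _ = ∑ k : K, ∑ g : G, (inner ℂ v (f₁ (g * k)) : ℂ) * inner ℂ (f₂ (g * k)) v := by
          refine Finset.sum_congr rfl fun k _ => ?_
          rw [hSdef]
          refine Fintype.sum_equiv (Equiv.mulRight (k : G)).symm _ _ fun g => ?_
          have he : ((Equiv.mulRight (k : G)).symm g) = g * (k : G)⁻¹ := rfl
          rw [he]
          have h1 : g * (k : G)⁻¹ * k = g := by group
          rw [h1]
      _ = ∑ g : G, ∑ k : K, (inner ℂ v (f₁ (g * k)) : ℂ) * inner ℂ (f₂ (g * k)) v :=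
          Finset.sum_comm
      _ = ∑ g : G, (Fintype.card K : ℂ) / (Module.finrank ℂ V : ℂ)
            * inner ℂ (f₂ g) (f₁ g) := by
          refine Finset.sum_congr rfl fun g _ => ?_
          have hterm : ∀ k : K, (inner ℂ v (f₁ (g * k)) : ℂ) * inner ℂ (f₂ (g * k)) v
              = (inner ℂ (θ k v) (f₁ g) : ℂ) * inner ℂ (f₂ g) (θ k v) := by
            intro k
            rw [hf₁ g k, hf₂ g k, map_inv]
            rw [inner_theta_inv_right K θ hu k v (f₁ g),
              inner_theta_inv_left K θ hu k (f₂ g) v]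
          rw [Finset.sum_congr rfl (fun k _ => hterm k),
            key_orth K θ hu hirr v hv (f₁ g) (f₂ g)]
      _ = (Fintype.card K : ℂ) / (Module.finrank ℂ V : ℂ) * T := by
          rw [hTdef, Finset.mul_sum]
  have hS : S = T / (Module.finrank ℂ V : ℂ) := by
    refine mul_left_cancel₀ hN ?_
    rw [hkey, div_mul_eq_mul_div, mul_div_assoc]
  calc innerC (Tv K v f₁) (Tv K v f₂)
      = ∑ g : G, (c * inner ℂ v (f₁ g)) * conj (c * inner ℂ v (f₂ g)) := rfl
    _ = ∑ g : G, (c * c) * ((inner ℂ v (f₁ g) : ℂ) * inner ℂ (f₂ g) v) := by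
        refine Finset.sum_congr rfl fun g _ => ?_
        rw [map_mul, hcconj, inner_conj_symm]
        ring
    _ = (c * c) * S := by rw [hSdef, Finset.mul_sum]
    _ = innerInd K f₁ f₂ := by
        rw [hcc, hS]
        show _ = (Nat.card K : ℂ)⁻¹ * ∑ g : G, (inner ℂ (f₂ g) (f₁ g) : ℂ)
        rw [← hTdef, natCard_eq]
        field_simp



/-- Expansion of convolution with ψ. -/
lemma conv_psi_expand (hu : IsUnitaryRep θ) (v : V) (φ : G → ℂ) (g : G) :
    convC φ (psi K θ v) g = ∑ k : K, φ (g * k) *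
      (((Module.finrank ℂ V : ℂ) / (Nat.card K : ℂ)) * (inner ℂ v (θ k v) : ℂ)) := by
  show ∑ h : G, φ h * psi K θ v (h⁻¹ * g) = _
  have step1 : ∑ h : G, φ h * psi K θ v (h⁻¹ * g)
      = ∑ x : G, φ (g * x⁻¹) * psi K θ v x := by
    refine (Fintype.sum_equiv ((Equiv.inv G).trans (Equiv.mulLeft g))
      (fun x => φ (g * x⁻¹) * psi K θ v x)
      (fun h => φ h * psi K θ v (h⁻¹ * g)) fun x => ?_).symm
    show φ (g * x⁻¹) * psi K θ v x = φ (g * x⁻¹) * psi K θ v ((g * x⁻¹)⁻¹ * g)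
    have h1 : (g * x⁻¹)⁻¹ * g = x := by group
    rw [h1]
  rw [step1, sum_restrict_K K (fun x => φ (g * x⁻¹) * psi K θ v x)
    (fun x hx => show φ (g * x⁻¹) * psi K θ v x = 0 by
      rw [psi_apply_not_mem K θ v hx, mul_zero])]
  refine Fintype.sum_equiv (Equiv.inv K) _ _ fun k => ?_
  show φ (g * (↑k)⁻¹) * psi K θ v ↑k = φ (g * ↑(k⁻¹)) *
    (((Module.finrank ℂ V : ℂ) / (Nat.card K : ℂ)) * (inner ℂ v (θ k⁻¹ v) : ℂ))
  have h1 : ((k⁻¹ : K) : G) = ((k : G))⁻¹ := rfl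
  rw [h1]
  congr 1
  rw [psi_apply_mem K θ v k.2]
  simp only [Subtype.coe_eta]
  rw [map_inv, inner_theta_inv_right K θ hu k v v]

/-- The image of `T_v` is exactly `{φ | φ ∗ ψ = φ}`. -/
lemma image_Tv_eq (hu : IsUnitaryRep θ) (hirr : IsIrreducibleRep θ) (v : V) (hv : ‖v‖ = 1) :
    Tv K v '' (ind K θ : Set (G → V)) = {φ : G → ℂ | convC φ (psi K θ v) = φ} := by
  obtain ⟨hc0, hcc⟩ := sqrt_const_facts K θ hirr
  set c : ℂ := ((Real.sqrt ((Module.finrank ℂ V : ℝ) / (Nat.card K : ℝ))) : ℂ) with hcdef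
  have hN : (Nat.card K : ℂ) ≠ 0 := card_K_ne_zero K
  have hd := finrank_ne_zero K θ hirr
  apply Set.eq_of_subset_of_subset
  · rintro φ ⟨f, hf, rfl⟩
    show convC (Tv K v f) (psi K θ v) = Tv K v f
    funext g
    rw [conv_psi_expand K θ hu v (Tv K v f) g]
    have hterm : ∀ k : K, Tv K v f (g * k)
        = c * (inner ℂ (θ k v) (f g) : ℂ) := by
      intro k
      show c * (inner ℂ v (f (g * k)) : ℂ) = _
      rw [hf g k, map_inv, inner_theta_inv_right K θ hu k v (f g)]
    calc ∑ k : K, Tv K v f (g * k) *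
          (((Module.finrank ℂ V : ℂ) / (Nat.card K : ℂ)) * (inner ℂ v (θ k v) : ℂ))
        = c * ((Module.finrank ℂ V : ℂ) / (Nat.card K : ℂ)) *
            ∑ k : K, (inner ℂ (θ k v) (f g) : ℂ) * inner ℂ v (θ k v) := by
          rw [Finset.mul_sum]
          exact Finset.sum_congr rfl fun k _ => by rw [hterm k]; ring
      _ = c * (inner ℂ v (f g) : ℂ) := by
          rw [key_orth K θ hu hirr v hv (f g) v, natCard_eq]
          field_simp
      _ = Tv K v f g := rfl
  · intro φ hφ
    have hφ' : ∀ g : G, φ g = ∑ k : K, φ (g * k) *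
        (((Module.finrank ℂ V : ℂ) / (Nat.card K : ℂ)) * (inner ℂ v (θ k v) : ℂ)) := by
      intro g
      conv_lhs => rw [← hφ]
      exact conv_psi_expand K θ hu v φ g
    set a : ℂ := ((Module.finrank ℂ V : ℂ) / (Nat.card K : ℂ)) / c with hadef
    set f : G → V := fun g => a • ∑ k : K, φ (g * k) • θ k v with hfdef
    have hfmem : f ∈ ind K θ := by
      intro g k₀
      show a • ∑ k : K, φ (g * k₀ * k) • θ k v
          = θ k₀⁻¹ (a • ∑ k : K, φ (g * k) • θ k v)
      rw [map_smul, map_sum]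
      congr 1
      refine Fintype.sum_equiv (Equiv.mulLeft k₀) _ _ fun k => ?_
      show φ (g * (k₀ : G) * (k : G)) • θ k v
          = θ k₀⁻¹ (φ (g * ((k₀ * k : K) : G)) • θ (k₀ * k) v)
      rw [map_smul]
      have harg : g * ((k₀ * k : K) : G) = g * (k₀ : G) * (k : G) := by
        push_cast
        group
      rw [harg]
      congr 1
      have h2 : θ k₀⁻¹ (θ (k₀ * k) v) = (θ k₀⁻¹ * θ (k₀ * k)) v := rfl
      rw [h2, ← map_mul, inv_mul_cancel_left]
    refine ⟨f, hfmem, ?_⟩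
    funext g
    show c * (inner ℂ v (f g) : ℂ) = φ g
    have hfg : f g = a • ∑ k : K, φ (g * k) • θ k v := rfl
    have hca : c * a = (Module.finrank ℂ V : ℂ) / (Nat.card K : ℂ) := by
      rw [hadef, mul_div_assoc', mul_comm, mul_div_assoc, div_self hc0, mul_one]
    calc c * (inner ℂ v (f g) : ℂ)
        = ∑ k : K, (c * a) * (φ (g * k) * inner ℂ v (θ k v)) := by
          rw [hfg, inner_smul_right, inner_sum]
          simp only [inner_smul_right]
          rw [Finset.mul_sum, Finset.mul_sum]
          exact Finset.sum_congr rfl fun k _ => by ring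
      _ = ∑ k : K, φ (g * k) *
            (((Module.finrank ℂ V : ℂ) / (Nat.card K : ℂ)) * (inner ℂ v (θ k v) : ℂ)) := by
          rw [hca]
          exact Finset.sum_congr rfl fun k _ => by ring
      _ = φ g := (hφ' g).symm

end Aux

/-- (1) `T_v : Ind_K^G V → L(G)`, `(T_v f) g = √(d_θ/|K|) ⟨f g, v⟩`, is a
`G`-equivariant linear isometry of the induced space into `L(G)` with its left regular
representation; in particular its image `I(G,K,ψ)` is a `G`-invariant subspace of `L(G)`
`G`-isomorphic to `Ind_K^G V`.  (2) `ψ * ψ = ψ`, `ψ* = ψ`, and the operator `P f = f * ψ` is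
the orthogonal projection of `L(G)` onto `I(G,K,ψ)`, whence
`I(G,K,ψ) = {f * ψ : f ∈ L(G)} = {f : f * ψ = f}`. -/
theorem statement2 (K : Subgroup G) (θ : ↥K →* (V ≃ₗ[ℂ] V))
    (hu : IsUnitaryRep θ) (hirr : IsIrreducibleRep θ) (v : V) (hv : ‖v‖ = 1) :
    -- (1) T_v is linear ...
    (∀ f₁ f₂ : G → V, Tv K v (f₁ + f₂) = Tv K v f₁ + Tv K v f₂) ∧
    (∀ (c : ℂ) (f : G → V), Tv K v (c • f) = c • Tv K v f) ∧
    -- ... G-equivariant ...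
    (∀ (h : G) (f : G → V), Tv K v (translate h f) = translate h (Tv K v f)) ∧
    -- ... and isometric (hence injective) on the induced space
    (∀ f₁ ∈ ind K θ, ∀ f₂ ∈ ind K θ, innerC (Tv K v f₁) (Tv K v f₂) = innerInd K f₁ f₂) ∧
    (∀ f₁ ∈ ind K θ, ∀ f₂ ∈ ind K θ, Tv K v f₁ = Tv K v f₂ → f₁ = f₂) ∧
    -- the image I(G,K,ψ) is G-invariant
    (∀ h : G, ∀ φ ∈ Tv K v '' (ind K θ : Set (G → V)),
      translate h φ ∈ Tv K v '' (ind K θ : Set (G → V))) ∧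
    -- (2) ψ is a self-adjoint idempotent
    convC (psi K θ v) (psi K θ v) = psi K θ v ∧
    starC (psi K θ v) = psi K θ v ∧
    -- P f = f * ψ is self-adjoint ...
    (∀ f₁ f₂ : G → ℂ, innerC (convC f₁ (psi K θ v)) f₂ = innerC f₁ (convC f₂ (psi K θ v))) ∧
    -- ... idempotent (since ψ * ψ = ψ), and its range is exactly I(G,K,ψ) = T_v(Ind_K^G V):
    Tv K v '' (ind K θ : Set (G → V)) = {φ : G → ℂ | convC φ (psi K θ v) = φ} ∧
    Set.range (fun f : G → ℂ => convC f (psi K θ v)) = {φ : G → ℂ | convC φ (psi K θ v) = φ} := by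
  have hTadd : ∀ f₁ f₂ : G → V, Tv K v (f₁ + f₂) = Tv K v f₁ + Tv K v f₂ := by
    intro f₁ f₂; funext g
    show _ * (inner ℂ v ((f₁ + f₂) g) : ℂ) = _ * (inner ℂ v (f₁ g) : ℂ) + _ * (inner ℂ v (f₂ g) : ℂ)
    rw [Pi.add_apply, inner_add_right, mul_add]
  have hTsmul : ∀ (c : ℂ) (f : G → V), Tv K v (c • f) = c • Tv K v f := by
    intro c f; funext g
    show _ * (inner ℂ v ((c • f) g) : ℂ) = c * (_ * (inner ℂ v (f g) : ℂ))
    rw [Pi.smul_apply, inner_smul_right]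
    ring
  have hTequiv : ∀ (h : G) (f : G → V), Tv K v (translate h f) = translate h (Tv K v f) :=
    fun h f => rfl
  have hisom := Tv_isometry K θ hu hirr v hv
  have hinj : ∀ f₁ ∈ ind K θ, ∀ f₂ ∈ ind K θ, Tv K v f₁ = Tv K v f₂ → f₁ = f₂ := by
    intro f₁ h₁ f₂ h₂ heq
    have hsub : f₁ - f₂ ∈ ind K θ := (ind K θ).sub_mem h₁ h₂
    have hz : Tv K v (f₁ - f₂) = 0 := by
      funext g
      have hg := congrFun heq g
      simp only [Tv] at hg ⊢
      rw [Pi.sub_apply, inner_sub_right, mul_sub, hg, sub_self]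
      rfl
    have h0 : (Nat.card K : ℂ)⁻¹ * ∑ g : G, (inner ℂ ((f₁ - f₂) g) ((f₁ - f₂) g) : ℂ) = 0 := by
      have := hisom _ hsub _ hsub
      rw [hz] at this
      have h2 : innerC (0 : G → ℂ) (0 : G → ℂ) = 0 := by
        show ∑ _g : G, (0 : ℂ) * conj (0 : ℂ) = 0
        simp
      rw [h2] at this
      exact this.symm
    have hsum : ∑ g : G, (inner ℂ ((f₁ - f₂) g) ((f₁ - f₂) g) : ℂ) = 0 := by
      rcases mul_eq_zero.mp h0 with h | h
      · exact absurd (inv_eq_zero.mp h) (card_K_ne_zero K)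
      · exact h
    have hsum' : ((∑ g : G, ‖(f₁ - f₂) g‖ ^ 2 : ℝ) : ℂ) = 0 := by
      push_cast
      rw [← hsum]
      exact Finset.sum_congr rfl fun g _ => by rw [inner_self_eq_norm_sq_to_K (𝕜 := ℂ)]; norm_cast
    have hr : ∑ g : G, ‖(f₁ - f₂) g‖ ^ 2 = 0 := by exact_mod_cast hsum'
    funext g
    have hg0 : ‖(f₁ - f₂) g‖ ^ 2 = 0 :=
      (Finset.sum_eq_zero_iff_of_nonneg (fun g _ => sq_nonneg _)).mp hr g (Finset.mem_univ g)
    have hn : ‖(f₁ - f₂) g‖ = 0 := by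
      have := sq_eq_zero_iff.mp hg0
      exact this
    have : (f₁ - f₂) g = 0 := norm_eq_zero.mp hn
    rw [Pi.sub_apply] at this
    exact sub_eq_zero.mp this
  have hinvar : ∀ h : G, ∀ φ ∈ Tv K v '' (ind K θ : Set (G → V)),
      translate h φ ∈ Tv K v '' (ind K θ : Set (G → V)) := by
    rintro h φ ⟨f, hfmem, rfl⟩
    exact ⟨translate h f, translate_mem_ind K θ hfmem h, (hTequiv h f).symm⟩
  have himage := image_Tv_eq K θ hu hirr v hv
  have hrange : Set.range (fun f : G → ℂ => convC f (psi K θ v))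
      = {φ : G → ℂ | convC φ (psi K θ v) = φ} := by
    apply Set.eq_of_subset_of_subset
    · rintro φ ⟨f, rfl⟩
      show convC (convC f (psi K θ v)) (psi K θ v) = convC f (psi K θ v)
      rw [convC_assoc, psi_conv_psi K θ hu hirr v hv]
    · intro φ hφ
      exact ⟨φ, hφ⟩
  exact ⟨hTadd, hTsmul, hTequiv, hisom, hinj, hinvar,
    psi_conv_psi K θ hu hirr v hv, psi_star_eq K θ hu v,
    conv_selfadj (psi K θ v) (psi_conj K θ hu v), himage, hrange⟩

end MFT
end
end

section
/- (Generalized Bump–Ginzburg criterion) Suppose there exist an antiautomorphism τ : G → G and an algebra antiautomorphism T ↦ T^♯ of End(V) such that: (i) τ(K) = K; (ii) θ(τ(k)) = θ(k)^♯ for all k ∈ K; (iii) for every s ∈ S₀ there exist k₁, k₂ ∈ K with τ(s) = k₁sk₂ and θ(k₂)* T θ(k₁)* = T^♯ for all T ∈ Hom_{K_s}(Res^K_{K_s}θ, θ^s); and (iv) (T^♯)* = (T*)^♯ for all T ∈ End(V). Then the triple (G,K,θ) is multiplicity-free, i.e., dim Hom_G(W, Ind_K^G V) ≤ 1 for every irreducible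 G-representation W. -/
open scoped BigOperators ComplexConjugate Classical

set_option linter.unusedSectionVars false
set_option synthInstance.maxHeartbeats 1000000
set_option maxHeartbeats 1000000

noncomputable section

namespace MFT

variable {G : Type} [Group G] [Fintype G]
variable {V : Type} [NormedAddCommGroup V] [InnerProductSpace ℂ V] [FiniteDimensional ℂ V]

variable (K : Subgroup G) (θ : ↥K →* (V ≃ₗ[ℂ] V))

theorem equiv_inv_eq_symm (e : V ≃ₗ[ℂ] V) : e⁻¹ = e.symm := rfl

theorem adjoint_theta (hu : IsUnitaryRep θ) (k : K) :
    LinearMap.adjoint (θ k).toLinearMap = (θ k⁻¹).toLinearMap := by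
  symm
  rw [LinearMap.eq_adjoint_iff]
  intro x y
  have h1 : (θ k) ((θ k)⁻¹ x) = x := LinearEquiv.apply_symm_apply _ _
  calc (inner ℂ ((θ k⁻¹) x) y : ℂ) = inner ℂ (θ k ((θ k⁻¹) x)) (θ k y) := (hu k _ _).symm
  _ = inner ℂ x ((θ k).toLinearMap y) := by rw [map_inv, h1]; rfl

theorem hecke_val_mem {F : G → (V →ₗ[ℂ] V)} (hF : IsHecke K θ F) (s : G) :
    F s ∈ interSpace K θ s := by
  intro x hx hx'
  have h1 : F ((x : G) * s) = F s ∘ₗ (θ (⟨x, hx⟩ : K)⁻¹).toLinearMap := by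
    have := hF s ⟨x, hx⟩ 1
    simpa using this
  have h2 : F ((x : G) * s) = (θ (⟨s⁻¹ * x * s, hx'⟩ : K)⁻¹).toLinearMap ∘ₗ F s := by
    have := hF s 1 ⟨s⁻¹ * x * s, hx'⟩
    have e : s * (s⁻¹ * x * s) = x * s := by group
    simpa [e] using this
  have h3 : F s ∘ₗ (θ (⟨x, hx⟩ : K)⁻¹).toLinearMap
      = (θ (⟨s⁻¹ * x * s, hx'⟩ : K)⁻¹).toLinearMap ∘ₗ F s := h1 ▸ h2
  ext v
  have := congrArg (fun (A : V →ₗ[ℂ] V) => (θ (⟨s⁻¹*x*s, hx'⟩ : K)) (A ((θ (⟨x, hx⟩ : K)) v))) h3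
  simp only [LinearMap.comp_apply, LinearEquiv.coe_coe] at this ⊢
  rw [map_inv, map_inv, equiv_inv_eq_symm, equiv_inv_eq_symm, LinearEquiv.symm_apply_apply,
    LinearEquiv.apply_symm_apply] at this
  rw [this]

section Tau
variable (τ : G → G)

theorem tau_one (hτbij : Function.Bijective τ) (hτanti : ∀ a b : G, τ (a * b) = τ b * τ a) :
    τ 1 = 1 := by
  have := hτanti 1 1
  rw [mul_one] at this
  exact (right_eq_mul.mp this)

theorem tau_inv (hτbij : Function.Bijective τ) (hτanti : ∀ a b : G, τ (a * b) = τ b * τ a)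
    (a : G) : τ a⁻¹ = (τ a)⁻¹ := by
  have h : τ a⁻¹ * τ a = 1 := by
    rw [← hτanti a a⁻¹, mul_inv_cancel, tau_one τ hτbij hτanti]
  exact eq_inv_of_mul_eq_one_left h

end Tau

theorem key_tau_sharp (hu : IsUnitaryRep θ)
    (S : Finset G) (hS : IsDoubleCosetReps K S)
    (τ : G → G) (hτbij : Function.Bijective τ)
    (hτanti : ∀ a b : G, τ (a * b) = τ b * τ a)
    (sharp : (V →ₗ[ℂ] V) →ₗ[ℂ] (V →ₗ[ℂ] V))
    (hsharpanti : ∀ A B : V →ₗ[ℂ] V, sharp (A ∘ₗ B) = sharp B ∘ₗ sharp A)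
    (hτK : ∀ g : G, g ∈ K ↔ τ g ∈ K)
    (hθτ : ∀ k k' : K, (k' : G) = τ (k : G) →
      (θ k').toLinearMap = sharp (θ k).toLinearMap)
    (hS₀ : ∀ s ∈ S, interSpace K θ s ≠ ⊥ →
      ∃ k₁ k₂ : K, τ s = (k₁ : G) * s * (k₂ : G) ∧
        ∀ T ∈ interSpace K θ s,
          LinearMap.adjoint (θ k₂).toLinearMap ∘ₗ T ∘ₗ
              LinearMap.adjoint (θ k₁).toLinearMap = sharp T)
    {F : G → (V →ₗ[ℂ] V)} (hF : IsHecke K θ F) :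
    ∀ g : G, F (τ g) = sharp (F g) := by
  -- Step 1: the claim for representatives
  have step1 : ∀ s ∈ S, F (τ s) = sharp (F s) := by
    intro s hs
    by_cases h0 : interSpace K θ s = ⊥
    · have hFs : F s = 0 := by
        have := hecke_val_mem K θ hF s
        rwa [h0, Submodule.mem_bot] at this
      rw [hFs, map_zero]
      obtain ⟨s', ⟨⟨hs'S, a, b, hab⟩, -⟩⟩ := hS (τ s)
      have h0' : interSpace K θ s' = ⊥ := by
        by_contra hne
        obtain ⟨k₁, k₂, hk, -⟩ := hS₀ s' hs'S hne
        -- show s and s' are in the same double coset, hence equal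
        have hs'' : s' = (k₁ : G)⁻¹ * τ s' * (k₂ : G)⁻¹ := by
          rw [hk]; group
        obtain ⟨c, hc⟩ := hτbij.2 ((a : G) * (k₁ : G)⁻¹)
        have hcK : c ∈ K := by
          rw [hτK]; rw [hc]; exact K.mul_mem a.2 (K.inv_mem k₁.2)
        obtain ⟨d, hd⟩ := hτbij.2 ((k₂ : G)⁻¹ * (b : G))
        have hdK : d ∈ K := by
          rw [hτK]; rw [hd]; exact K.mul_mem (K.inv_mem k₂.2) b.2
        have hts : τ (d * s' * c) = τ s := by
          rw [hτanti (d * s') c, hτanti d s', hc, hd, hk, hab]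
          group
        have hss' : s = d * s' * c := (hτbij.1 hts).symm
        -- uniqueness of double coset representatives
        obtain ⟨s₀, hs₀, huniq⟩ := hS s
        have e1 : s = s₀ := huniq s ⟨hs, 1, 1, by simp⟩
        have e2 : s' = s₀ := huniq s' ⟨hs'S, ⟨d, hdK⟩, ⟨c, hcK⟩, hss'⟩
        rw [e1, ← e2] at h0
        exact hne h0
      have hFs' : F s' = 0 := by
        have := hecke_val_mem K θ hF s'
        rwa [h0', Submodule.mem_bot] at this
      rw [hab, hF s' a b, hFs']
      simp
    · obtain ⟨k₁, k₂, hk, hT⟩ := hS₀ s hs h0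
      have h1 : F (τ s) = (θ k₂⁻¹).toLinearMap ∘ₗ F s ∘ₗ (θ k₁⁻¹).toLinearMap := by
        rw [hk]; exact hF s k₁ k₂
      rw [h1, ← adjoint_theta K θ hu, ← adjoint_theta K θ hu]
      exact hT (F s) (hecke_val_mem K θ hF s)
  -- Step 2: extend to all of G
  intro g
  obtain ⟨s, ⟨hsS, a, b, hab⟩, -⟩ := hS g
  have haK : τ (a : G) ∈ K := (hτK _).mp a.2
  have hbK : τ (b : G) ∈ K := (hτK _).mp b.2
  set a' : K := ⟨τ (a : G), haK⟩
  set b' : K := ⟨τ (b : G), hbK⟩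
  have hτg : τ g = (b' : G) * τ s * (a' : G) := by
    rw [hab, hτanti ((a : G) * s) b, hτanti a s]
    group
    rfl
  have hFτg : F (τ g) = (θ a'⁻¹).toLinearMap ∘ₗ F (τ s) ∘ₗ (θ b'⁻¹).toLinearMap := by
    rw [hτg]; exact hF (τ s) b' a'
  have ha' : (θ a'⁻¹).toLinearMap = sharp (θ a⁻¹).toLinearMap := by
    refine hθτ a⁻¹ a'⁻¹ ?_
    simp only [InvMemClass.coe_inv]
    rw [tau_inv τ hτbij hτanti]
  have hb' : (θ b'⁻¹).toLinearMap = sharp (θ b⁻¹).toLinearMap := by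
    refine hθτ b⁻¹ b'⁻¹ ?_
    simp only [InvMemClass.coe_inv]
    rw [tau_inv τ hτbij hτanti]
  rw [hFτg, ha', hb', step1 s hsS, hab, hF s a b]
  rw [hsharpanti ((θ b⁻¹).toLinearMap) (F s ∘ₗ (θ a⁻¹).toLinearMap),
    hsharpanti (F s) ((θ a⁻¹).toLinearMap), LinearMap.comp_assoc]

theorem isHecke_conv {F₁ F₂ : G → (V →ₗ[ℂ] V)} (h₁ : IsHecke K θ F₁) (h₂ : IsHecke K θ F₂) :
    IsHecke K θ (heckeConv F₁ F₂) := by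
  intro g k₁ k₂
  unfold heckeConv
  rw [← Equiv.sum_comp (Equiv.mulLeft (k₁ : G)) (fun h => F₁ (h⁻¹ * ((k₁ : G) * g * (k₂ : G))) ∘ₗ F₂ h)]
  have : ∀ h : G, F₁ (((k₁ : G) * h)⁻¹ * ((k₁ : G) * g * (k₂ : G))) ∘ₗ F₂ ((k₁ : G) * h)
      = (θ k₂⁻¹).toLinearMap ∘ₗ (F₁ (h⁻¹ * g) ∘ₗ F₂ h) ∘ₗ (θ k₁⁻¹).toLinearMap := by
    intro h
    have hh1 : F₁ (h⁻¹ * g * (k₂ : G)) = (θ k₂⁻¹).toLinearMap ∘ₗ F₁ (h⁻¹ * g) := by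
      simpa using h₁ (h⁻¹ * g) 1 k₂
    have hh2 : F₂ ((k₁ : G) * h) = F₂ h ∘ₗ (θ k₁⁻¹).toLinearMap := by
      simpa using h₂ h k₁ 1
    rw [show ((k₁ : G) * h)⁻¹ * ((k₁ : G) * g * (k₂ : G)) = h⁻¹ * g * (k₂ : G) by group,
      hh1, hh2]
    simp only [LinearMap.comp_assoc]
  simp only [Equiv.coe_mulLeft, this]
  ext v
  simp [LinearMap.comp_apply, LinearMap.sum_apply, Finset.sum_apply, map_sum]

theorem conv_comm_of_key
    (τ : G → G) (hτbij : Function.Bijective τ)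
    (hτanti : ∀ a b : G, τ (a * b) = τ b * τ a)
    (sharp : (V →ₗ[ℂ] V) →ₗ[ℂ] (V →ₗ[ℂ] V)) (hsharpinj : Function.Injective sharp)
    (hsharpanti : ∀ A B : V →ₗ[ℂ] V, sharp (A ∘ₗ B) = sharp B ∘ₗ sharp A)
    (hkey : ∀ (F : G → (V →ₗ[ℂ] V)), IsHecke K θ F → ∀ g : G, F (τ g) = sharp (F g))
    {F₁ F₂ : G → (V →ₗ[ℂ] V)} (h₁ : IsHecke K θ F₁) (h₂ : IsHecke K θ F₂) :
    heckeConv F₁ F₂ = heckeConv F₂ F₁ := by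
  funext g
  apply hsharpinj
  have key12 := hkey (heckeConv F₁ F₂) (isHecke_conv K θ h₁ h₂) g
  have key21 := hkey (heckeConv F₂ F₁) (isHecke_conv K θ h₂ h₁) g
  rw [← key12]
  -- show (F₁ ∗ F₂) (τ g) = (F₂ ∗ F₁) (τ g) by reindexing
  unfold heckeConv
  have hτinv : ∀ a : G, τ a⁻¹ = (τ a)⁻¹ := tau_inv τ hτbij hτanti
  calc ∑ h : G, F₁ (h⁻¹ * τ g) ∘ₗ F₂ h
      = ∑ u : G, F₁ ((τ u)⁻¹ * τ g) ∘ₗ F₂ (τ u) := by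
        rw [← Equiv.sum_comp (Equiv.ofBijective τ hτbij)
          (fun h => F₁ (h⁻¹ * τ g) ∘ₗ F₂ h)]
        rfl
    _ = ∑ u : G, F₁ (τ (g * u⁻¹)) ∘ₗ F₂ (τ u) := by
        apply Finset.sum_congr rfl
        intro u _
        congr 2
        rw [hτanti g u⁻¹, hτinv]
    _ = ∑ u : G, sharp (F₂ u ∘ₗ F₁ (g * u⁻¹)) := by
        apply Finset.sum_congr rfl
        intro u _
        rw [hkey F₁ h₁, hkey F₂ h₂, ← hsharpanti]
    _ = sharp (∑ u : G, F₂ u ∘ₗ F₁ (g * u⁻¹)) := by rw [map_sum]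
    _ = sharp (∑ h : G, F₂ (h⁻¹ * g) ∘ₗ F₁ h) := by
        congr 1
        rw [← Equiv.sum_comp ((Equiv.inv G).trans (Equiv.mulRight g))
          (fun u => F₂ u ∘ₗ F₁ (g * u⁻¹))]
        apply Finset.sum_congr rfl
        intro h _
        simp only [Equiv.trans_apply, Equiv.inv_apply, Equiv.coe_mulRight]
        congr 1
        group

theorem equiv_mul_apply (e₁ e₂ : V ≃ₗ[ℂ] V) (x : V) : (e₁ * e₂) x = e₁ (e₂ x) := rfl

/-- The function `δ_v(g) = θ(g)⁻¹ v` for `g ∈ K`, `0` otherwise. -/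
def deltaFun (v : V) : G → V := fun g => if h : g ∈ K then (θ ⟨g, h⟩)⁻¹ v else 0

theorem deltaFun_mem (v : V) : deltaFun K θ v ∈ ind K θ := by
  intro g k
  by_cases hg : g ∈ K
  · have hgk : g * (k : G) ∈ K := K.mul_mem hg k.2
    have : (⟨g * (k : G), hgk⟩ : K) = ⟨g, hg⟩ * k := rfl
    simp only [deltaFun, dif_pos hgk, dif_pos hg, this, map_mul, mul_inv_rev, equiv_mul_apply,
      map_inv]
  · have hgk : ¬ (g * (k : G) ∈ K) := by
      intro hc
      exact hg (by simpa using K.mul_mem hc (K.inv_mem k.2))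
    simp only [deltaFun, dif_neg hgk, dif_neg hg, map_zero]

/-- `deltaFun` as a linear map into the induced space. -/
def deltaL : V →ₗ[ℂ] ↥(ind K θ) where
  toFun v := ⟨deltaFun K θ v, deltaFun_mem K θ v⟩
  map_add' v w := by
    apply Subtype.ext
    funext g
    by_cases hg : g ∈ K <;> simp [deltaFun, hg]
  map_smul' c v := by
    apply Subtype.ext
    funext g
    by_cases hg : g ∈ K <;> simp [deltaFun, hg]

theorem translate_deltaFun (k : K) (v : V) :
    translate ((k : G))⁻¹ (deltaFun K θ v) = deltaFun K θ (θ k⁻¹ v) := by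
  funext g
  by_cases hg : g ∈ K
  · have hkg : (k : G) * g ∈ K := K.mul_mem k.2 hg
    have e : (⟨(k : G) * g, hkg⟩ : K) = k * ⟨g, hg⟩ := rfl
    simp only [translate, inv_inv, deltaFun, dif_pos hkg, dif_pos hg, e, map_mul, mul_inv_rev,
      equiv_mul_apply, map_inv]
  · have hkg : ¬ ((k : G) * g ∈ K) := by
      intro hc
      exact hg (by simpa using K.mul_mem (K.inv_mem k.2) hc)
    simp only [translate, inv_inv, deltaFun, dif_neg hkg, dif_neg hg, map_zero]

/-- Reconstruction: `f = |K|⁻¹ ∑ₕ λ(h) δ_{f(h)}`. -/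
theorem reconstruct (f : ↥(ind K θ)) :
    f = (Nat.card K : ℂ)⁻¹ • ∑ h : G, lamL K θ h (deltaL K θ ((f : G → V) h)) := by
  have hK0 : (Nat.card K : ℂ) ≠ 0 := by
    simp [Nat.card_pos.ne']
  apply Subtype.ext
  funext g
  have hterm : ∀ h : G, deltaFun K θ ((f : G → V) h) (h⁻¹ * g)
      = if h⁻¹ * g ∈ K then (f : G → V) g else 0 := by
    intro h
    by_cases hk : h⁻¹ * g ∈ K
    · rw [if_pos hk]
      have hfh : (f : G → V) h = θ (⟨h⁻¹ * g, hk⟩ : K) ((f : G → V) g) := by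
        have := f.2 g (⟨h⁻¹ * g, hk⟩ : K)⁻¹
        have e : g * (((⟨h⁻¹ * g, hk⟩ : K)⁻¹ : K) : G) = h := by
          simp only [InvMemClass.coe_inv]
          group
        rw [e] at this
        rw [this, inv_inv]
      simp only [deltaFun, dif_pos hk, hfh]
      exact LinearEquiv.symm_apply_apply _ _
    · rw [if_neg hk]
      simp only [deltaFun, dif_neg hk]
  have hcount : (Finset.univ.filter (fun h : G => h⁻¹ * g ∈ K)).card = Nat.card K := by
    have hbij : (Finset.univ.filter (fun h : G => h⁻¹ * g ∈ K)).card
        = (Finset.univ : Finset K).card := by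
      refine Finset.card_bij
        (fun h hh => (⟨h⁻¹ * g, (Finset.mem_filter.mp hh).2⟩ : K)) ?_ ?_ ?_
      · intro h hh; exact Finset.mem_univ _
      · intro h₁ hh₁ h₂ hh₂ hee
        have e1 : h₁⁻¹ * g = h₂⁻¹ * g := congrArg Subtype.val hee
        exact inv_injective (mul_right_cancel e1)
      · intro k _
        refine ⟨g * (k : G)⁻¹, Finset.mem_filter.mpr ⟨Finset.mem_univ _, ?_⟩, ?_⟩
        · rw [show (g * (k : G)⁻¹)⁻¹ * g = (k : G) by group]
          exact k.2
        · apply Subtype.ext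
          show (g * (k : G)⁻¹)⁻¹ * g = (k : G)
          group
    rw [hbij, Finset.card_univ, Nat.card_eq_fintype_card]
  have hsum : (∑ h : G, translate h (deltaFun K θ ((f : G → V) h))) g
      = (Nat.card K) • (f : G → V) g := by
    rw [Finset.sum_apply]
    have : ∀ h : G, translate h (deltaFun K θ ((f : G → V) h)) g
        = if h⁻¹ * g ∈ K then (f : G → V) g else 0 := fun h => hterm h
    rw [Finset.sum_congr rfl (fun h _ => this h), Finset.sum_ite, Finset.sum_const,
      Finset.sum_const_zero, add_zero, hcount]
  show (f : G → V) g = ((Nat.card K : ℂ)⁻¹ •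
      (((∑ h : G, lamL K θ h (deltaL K θ ((f : G → V) h))) : ↥(ind K θ)) : G → V)) g
  have hcoe : (((∑ h : G, lamL K θ h (deltaL K θ ((f : G → V) h))) : ↥(ind K θ)) : G → V)
      = ∑ h : G, translate h (deltaFun K θ ((f : G → V) h)) := by
    push_cast
    rfl
  rw [hcoe]
  simp only [Pi.smul_apply]
  rw [hsum, ← Nat.cast_smul_eq_nsmul ℂ, smul_smul, inv_mul_cancel₀ hK0, one_smul]

/-- The Hecke-algebra element associated to a `G`-equivariant endomorphism of the
induced representation. -/
def FT (T : ↥(ind K θ) →ₗ[ℂ] ↥(ind K θ)) : G → (V →ₗ[ℂ] V) := fun g =>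
  (Nat.card K : ℂ)⁻¹ • (LinearMap.proj g ∘ₗ (ind K θ).subtype ∘ₗ T ∘ₗ deltaL K θ)

theorem FT_apply (T : ↥(ind K θ) →ₗ[ℂ] ↥(ind K θ)) (g : G) (v : V) :
    FT K θ T g v = (Nat.card K : ℂ)⁻¹ • ((T (deltaL K θ v) : G → V) g) := rfl

theorem lamL_coe (h : G) (f : ↥(ind K θ)) :
    ((lamL K θ h f : ↥(ind K θ)) : G → V) = translate h (f : G → V) := rfl

theorem FT_isHecke {T : ↥(ind K θ) →ₗ[ℂ] ↥(ind K θ)} (hT : T ∈ commutant K θ) :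
    IsHecke K θ (FT K θ T) := by
  intro g k₁ k₂
  ext v
  simp only [LinearMap.comp_apply, LinearEquiv.coe_coe, FT_apply]
  rw [map_smul]
  congr 1
  -- reduce to the unscaled statement
  have e1 : (k₁ : G) * g * (k₂ : G) = ((k₁ : G) * g) * (k₂ : G) := by group
  have h2 : (T (deltaL K θ v) : G → V) ((k₁ : G) * g * (k₂ : G))
      = θ k₂⁻¹ ((T (deltaL K θ v) : G → V) ((k₁ : G) * g)) :=
    (T (deltaL K θ v)).2 ((k₁ : G) * g) k₂
  rw [h2]
  congr 1
  -- left translation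
  have h3 : (T (deltaL K θ v) : G → V) ((k₁ : G) * g)
      = ((lamL K θ ((k₁ : G))⁻¹ (T (deltaL K θ v)) : ↥(ind K θ)) : G → V) g := by
    rw [lamL_coe]
    simp [translate]
  rw [h3, ← hT ((k₁ : G))⁻¹ (deltaL K θ v)]
  have h4 : lamL K θ ((k₁ : G))⁻¹ (deltaL K θ v) = deltaL K θ ((θ k₁⁻¹) v) := by
    apply Subtype.ext
    rw [lamL_coe]
    exact translate_deltaFun K θ k₁ v
  rw [h4]

theorem FT_reconstruct {T : ↥(ind K θ) →ₗ[ℂ] ↥(ind K θ)} (hT : T ∈ commutant K θ)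
    (f : ↥(ind K θ)) (g : G) :
    ((T f : ↥(ind K θ)) : G → V) g = ∑ h : G, FT K θ T (h⁻¹ * g) ((f : G → V) h) := by
  conv_lhs => rw [reconstruct K θ f]
  rw [map_smul, map_sum]
  have hcomm : ∀ h : G, T (lamL K θ h (deltaL K θ ((f : G → V) h)))
      = lamL K θ h (T (deltaL K θ ((f : G → V) h))) := fun h => hT h _
  simp only [hcomm]
  have hcoe : ((((Nat.card K : ℂ)⁻¹ •
      ∑ h : G, lamL K θ h (T (deltaL K θ ((f : G → V) h)))) : ↥(ind K θ)) : G → V) g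
      = (Nat.card K : ℂ)⁻¹ • ∑ h : G,
          translate h ((T (deltaL K θ ((f : G → V) h)) : ↥(ind K θ)) : G → V) g := by
    push_cast
    simp only [Pi.smul_apply, Finset.sum_apply]
    rfl
  rw [hcoe, Finset.smul_sum]
  apply Finset.sum_congr rfl
  intro h _
  rw [FT_apply]
  rfl

theorem comp_mem_commutant {T₁ T₂ : ↥(ind K θ) →ₗ[ℂ] ↥(ind K θ)}
    (h₁ : T₁ ∈ commutant K θ) (h₂ : T₂ ∈ commutant K θ) : T₁ ∘ₗ T₂ ∈ commutant K θ := by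
  intro h f
  simp only [LinearMap.comp_apply, h₂ h f, h₁ h (T₂ f)]

theorem FT_comp {T₁ T₂ : ↥(ind K θ) →ₗ[ℂ] ↥(ind K θ)}
    (h₁ : T₁ ∈ commutant K θ) (h₂ : T₂ ∈ commutant K θ) :
    FT K θ (T₁ ∘ₗ T₂) = heckeConv (FT K θ T₁) (FT K θ T₂) := by
  have hK0 : (Nat.card K : ℂ) ≠ 0 := by simp [Nat.card_pos.ne']
  funext g
  ext v
  rw [FT_apply]
  have e0 : ((T₁ ∘ₗ T₂) (deltaL K θ v) : G → V) g
      = ((T₁ (T₂ (deltaL K θ v)) : ↥(ind K θ)) : G → V) g := rfl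
  rw [e0, FT_reconstruct K θ h₁ (T₂ (deltaL K θ v)) g]
  have e1 : ∀ h : G, ((T₂ (deltaL K θ v) : ↥(ind K θ)) : G → V) h
      = (Nat.card K : ℂ) • FT K θ T₂ h v := by
    intro h
    rw [FT_apply, smul_smul, mul_inv_cancel₀ hK0, one_smul]
  have e2 : heckeConv (FT K θ T₁) (FT K θ T₂) g v
      = ∑ h : G, FT K θ T₁ (h⁻¹ * g) (FT K θ T₂ h v) := by
    simp [heckeConv, LinearMap.sum_apply]
  rw [e2]
  rw [Finset.sum_congr rfl (fun h _ => by rw [e1 h])]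
  simp only [map_smul]
  rw [← Finset.smul_sum, smul_smul, inv_mul_cancel₀ hK0, one_smul]

theorem commutant_comm
    (hconv : ∀ {F₁ F₂ : G → (V →ₗ[ℂ] V)}, IsHecke K θ F₁ → IsHecke K θ F₂ →
      heckeConv F₁ F₂ = heckeConv F₂ F₁)
    {T₁ T₂ : ↥(ind K θ) →ₗ[ℂ] ↥(ind K θ)}
    (h₁ : T₁ ∈ commutant K θ) (h₂ : T₂ ∈ commutant K θ) :
    T₁ ∘ₗ T₂ = T₂ ∘ₗ T₁ := by
  refine LinearMap.ext fun f => Subtype.ext (funext fun g => ?_)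
  have r1 := FT_reconstruct K θ (comp_mem_commutant K θ h₁ h₂) f g
  have r2 := FT_reconstruct K θ (comp_mem_commutant K θ h₂ h₁) f g
  show ((((T₁ ∘ₗ T₂) f) : ↥(ind K θ)) : G → V) g = ((((T₂ ∘ₗ T₁) f) : ↥(ind K θ)) : G → V) g
  rw [r1, r2, FT_comp K θ h₁ h₂, FT_comp K θ h₂ h₁,
    hconv (FT_isHecke K θ h₁) (FT_isHecke K θ h₂)]

/-- Schur's lemma: a `σ`-equivariant endomorphism of an irreducible representation is scalar. -/
theorem schur_scalar {W : Type} [AddCommGroup W] [Module ℂ W] [FiniteDimensional ℂ W]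
    (σ : G →* (W ≃ₗ[ℂ] W)) (hσ : IsIrreducibleRep σ)
    (D : W →ₗ[ℂ] W) (hD : ∀ (g : G) (w : W), D (σ g w) = σ g (D w)) :
    ∃ c : ℂ, ∀ w : W, D w = c • w := by
  have hnt : Nontrivial W := by
    by_contra hc
    have : Subsingleton W := not_nontrivial_iff_subsingleton.mp hc
    exact hσ.1 (Subsingleton.elim _ _)
  obtain ⟨c, hc⟩ := Module.End.exists_eigenvalue (K := ℂ) (V := W) D
  obtain ⟨w₀, hw₀⟩ := hc.exists_hasEigenvector
  refine ⟨c, ?_⟩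
  set p : Submodule ℂ W := LinearMap.ker (D - c • LinearMap.id) with hp
  have hw₀p : w₀ ∈ p := by
    simp only [hp, LinearMap.mem_ker, LinearMap.sub_apply, LinearMap.smul_apply, LinearMap.id_apply]
    rw [hw₀.apply_eq_smul]
    simp
  have hinv : ∀ (g : G) (x : W), x ∈ p → σ g x ∈ p := by
    intro g x hx
    simp only [hp, LinearMap.mem_ker, LinearMap.sub_apply, LinearMap.smul_apply,
      LinearMap.id_apply] at hx ⊢
    rw [hD g x, ← map_smul, ← map_sub, hx, map_zero]
  rcases hσ.2 p hinv with hbot | htop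
  · exfalso
    rw [hbot] at hw₀p
    exact hw₀.2 (Submodule.mem_bot ℂ |>.mp hw₀p)
  · intro w
    have : w ∈ p := htop ▸ Submodule.mem_top
    simp only [hp, LinearMap.mem_ker, LinearMap.sub_apply, LinearMap.smul_apply,
      LinearMap.id_apply, sub_eq_zero] at this
    exact this

theorem mult_le_one_of_commutant_comm
    (hcomm : ∀ {T₁ T₂ : ↥(ind K θ) →ₗ[ℂ] ↥(ind K θ)},
      T₁ ∈ commutant K θ → T₂ ∈ commutant K θ → T₁ ∘ₗ T₂ = T₂ ∘ₗ T₁)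
    {W : Type} [AddCommGroup W] [Module ℂ W] [FiniteDimensional ℂ W]
    (σ : G →* (W ≃ₗ[ℂ] W)) (hσ : IsIrreducibleRep σ)
    {A B : W →ₗ[ℂ] (G → V)} (hA : A ∈ homGInd K θ σ) (hB : B ∈ homGInd K θ σ)
    (hA0 : A ≠ 0) : ∃ c : ℂ, B = c • A := by
  classical
  -- the codomain-restricted maps
  set Ah : W →ₗ[ℂ] ↥(ind K θ) := LinearMap.codRestrict (ind K θ) A hA.1 with hAh
  have hAh_eq : ∀ (g : G) (w : W), Ah (σ g w) = lamL K θ g (Ah w) := by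
    intro g w
    apply Subtype.ext
    show A (σ g w) = translate g (A w)
    exact hA.2 g w
  -- Ah is injective
  have hAinj : Function.Injective Ah := by
    rw [← LinearMap.ker_eq_bot]
    rcases hσ.2 (LinearMap.ker Ah) (fun g x hx => by
      rw [LinearMap.mem_ker] at hx ⊢
      rw [hAh_eq g x, hx, map_zero]) with h | h
    · exact h
    · exfalso
      apply hA0
      apply LinearMap.ext
      intro w
      have : Ah w = 0 := LinearMap.mem_ker.mp (h ▸ Submodule.mem_top)
      have := congrArg Subtype.val this
      exact this
  -- the image of Ah, a G-invariant subspace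
  set U : Submodule ℂ ↥(ind K θ) := LinearMap.range Ah with hU
  have hUinv : ∀ (g : G), ∀ u ∈ U, lamL K θ g u ∈ U := by
    rintro g u ⟨w, rfl⟩
    exact ⟨σ g w, hAh_eq g w⟩
  -- an equivariant projection onto U
  obtain ⟨U', hU'⟩ := Submodule.exists_isCompl U
  set pr : ↥(ind K θ) →ₗ[ℂ] ↥(ind K θ) :=
    U.subtype ∘ₗ (U.linearProjOfIsCompl U' hU') with hpr
  have hprU : ∀ u ∈ U, pr u = u := by
    intro u hu
    show (U.subtype) ((U.linearProjOfIsCompl U' hU') u) = u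
    erw [show u = ((⟨u, hu⟩ : U) : ↥(ind K θ)) from rfl,
      Submodule.linearProjOfIsCompl_apply_left hU' ⟨u, hu⟩]
    rfl
  have hprrange : ∀ x, pr x ∈ U := fun x => ((U.linearProjOfIsCompl U' hU') x).2
  set π : ↥(ind K θ) →ₗ[ℂ] ↥(ind K θ) :=
    (Fintype.card G : ℂ)⁻¹ • ∑ g : G, (lamL K θ g) ∘ₗ pr ∘ₗ (lamL K θ g⁻¹) with hπ
  have hG0 : (Fintype.card G : ℂ) ≠ 0 := by
    simp [Fintype.card_pos.ne']
  have hlam_mul : ∀ (a b : G) (f : ↥(ind K θ)),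
      lamL K θ a (lamL K θ b f) = lamL K θ (a * b) f := by
    intro a b f
    apply Subtype.ext
    funext x
    show (f : G → V) (b⁻¹ * (a⁻¹ * x)) = (f : G → V) ((a * b)⁻¹ * x)
    rw [mul_inv_rev, mul_assoc]
  have hπcomm : π ∈ commutant K θ := by
    intro h f
    simp only [hπ, LinearMap.smul_apply, LinearMap.sum_apply, LinearMap.comp_apply, map_smul,
      map_sum]
    congr 1
    rw [← Equiv.sum_comp (Equiv.mulLeft h)
      (fun g => lamL K θ g (pr (lamL K θ g⁻¹ (lamL K θ h f))))]
    apply Finset.sum_congr rfl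
    intro g _
    simp only [Equiv.coe_mulLeft]
    have e1 : lamL K θ (h * g)⁻¹ (lamL K θ h f) = lamL K θ g⁻¹ f := by
      rw [hlam_mul]
      congr 1
      group
    rw [e1, ← hlam_mul h g (pr (lamL K θ g⁻¹ f))]
  have hπU : ∀ u ∈ U, π u = u := by
    intro u hu
    simp only [hπ, LinearMap.smul_apply, LinearMap.sum_apply, LinearMap.comp_apply]
    have : ∀ g : G, lamL K θ g (pr (lamL K θ g⁻¹ u)) = u := by
      intro g
      rw [hprU _ (hUinv g⁻¹ u hu), hlam_mul]
      simp only [mul_inv_cancel]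
      apply Subtype.ext
      funext x
      show (u : G → V) ((1 : G)⁻¹ * x) = (u : G → V) x
      rw [inv_one, one_mul]
    rw [Finset.sum_congr rfl (fun g _ => this g), Finset.sum_const, Finset.card_univ,
      ← Nat.cast_smul_eq_nsmul ℂ, smul_smul, inv_mul_cancel₀ hG0, one_smul]
  have hπrange : ∀ x, π x ∈ U := by
    intro x
    simp only [hπ, LinearMap.smul_apply, LinearMap.sum_apply, LinearMap.comp_apply]
    refine U.smul_mem _ (Submodule.sum_mem U fun g _ => ?_)
    exact hUinv g _ (hprrange _)
  -- the inverse map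
  set eA : W ≃ₗ[ℂ] U := LinearEquiv.ofInjective Ah hAinj with heA
  set Binv : ↥(ind K θ) →ₗ[ℂ] W :=
    (eA.symm.toLinearMap) ∘ₗ (LinearMap.codRestrict U π hπrange) with hBinv
  have hBinvA : ∀ x : ↥(ind K θ), Ah (Binv x) = π x := by
    intro x
    have : ∀ y : U, Ah (eA.symm y) = (y : ↥(ind K θ)) := by
      intro y
      conv_rhs => rw [← eA.apply_symm_apply y]
      rfl
    simp only [hBinv, LinearMap.comp_apply, LinearEquiv.coe_coe]
    rw [this]
    rfl
  have hBinvAh : ∀ w : W, Binv (Ah w) = w := by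
    intro w
    apply hAinj
    rw [hBinvA, hπU _ ⟨w, rfl⟩]
  have hBinv_eq : ∀ (g : G) (x : ↥(ind K θ)), Binv (lamL K θ g x) = σ g (Binv x) := by
    intro g x
    apply hAinj
    rw [hBinvA, hAh_eq, hBinvA, ← hπcomm g x]
  -- Schur applied to Binv ∘ Bh
  set Bh : W →ₗ[ℂ] ↥(ind K θ) := LinearMap.codRestrict (ind K θ) B hB.1 with hBh
  have hBh_eq : ∀ (g : G) (w : W), Bh (σ g w) = lamL K θ g (Bh w) := by
    intro g w
    apply Subtype.ext
    show B (σ g w) = translate g (B w)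
    exact hB.2 g w
  obtain ⟨c, hc⟩ := schur_scalar σ hσ (Binv ∘ₗ Bh) (by
    intro g w
    simp only [LinearMap.comp_apply]
    rw [hBh_eq, hBinv_eq])
  refine ⟨c, ?_⟩
  -- B₂ := B - c • A is sent to zero
  set B₂ : W →ₗ[ℂ] ↥(ind K θ) := Bh - c • Ah with hB₂
  have hB₂_eq : ∀ (g : G) (w : W), B₂ (σ g w) = lamL K θ g (B₂ w) := by
    intro g w
    simp only [hB₂, LinearMap.sub_apply, LinearMap.smul_apply, hBh_eq, hAh_eq, map_sub, map_smul]
  have hBinvB₂ : ∀ w, Binv (B₂ w) = 0 := by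
    intro w
    simp only [hB₂, LinearMap.sub_apply, LinearMap.smul_apply, map_sub, map_smul]
    rw [hBinvAh]
    have := hc w
    simp only [LinearMap.comp_apply] at this
    rw [this, sub_self]
  -- the two commutant elements
  set P₁ : ↥(ind K θ) →ₗ[ℂ] ↥(ind K θ) := Ah ∘ₗ Binv with hP₁
  set P₂ : ↥(ind K θ) →ₗ[ℂ] ↥(ind K θ) := B₂ ∘ₗ Binv with hP₂
  have hP₁c : P₁ ∈ commutant K θ := by
    intro h f
    simp only [hP₁, LinearMap.comp_apply]
    rw [hBinv_eq, hAh_eq]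
  have hP₂c : P₂ ∈ commutant K θ := by
    intro h f
    simp only [hP₂, LinearMap.comp_apply]
    rw [hBinv_eq, hB₂_eq]
  have h12 : P₁ ∘ₗ P₂ = 0 := by
    apply LinearMap.ext
    intro x
    simp only [hP₁, hP₂, LinearMap.comp_apply, LinearMap.zero_apply]
    rw [hBinvB₂, map_zero]
  have h21 : P₂ ∘ₗ P₁ = 0 := by rw [hcomm hP₂c hP₁c, h12]
  -- conclude B₂ = 0
  have hB₂0 : ∀ w : W, B₂ w = 0 := by
    intro w
    have := congrArg (fun (T : ↥(ind K θ) →ₗ[ℂ] ↥(ind K θ)) => T (Ah w)) h21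
    simp only [hP₂, hP₁, LinearMap.comp_apply, LinearMap.zero_apply] at this
    rwa [hBinvAh, hBinvAh] at this
  apply LinearMap.ext
  intro w
  have := hB₂0 w
  simp only [hB₂, LinearMap.sub_apply, LinearMap.smul_apply, sub_eq_zero] at this
  have := congrArg Subtype.val this
  exact this

/-- generalized Bump–Ginzburg criterion.  Suppose `τ` is an antiautomorphism
of `G` and `T ↦ T^♯` an algebra antiautomorphism of `End(V)` commuting with the adjoint, such
that `τ(K) = K`, `θ(τ k) = θ(k)^♯`, and for every `s ∈ S₀` there are `k₁ k₂ ∈ K` with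
`τ s = k₁ s k₂` and `θ(k₂)* T θ(k₁)* = T^♯` for all `T ∈ Hom_{K_s}(Res θ, θ^s)`.  Then the
triple `(G,K,θ)` is multiplicity-free. -/
theorem statement6 (K : Subgroup G) (θ : ↥K →* (V ≃ₗ[ℂ] V))
    (hu : IsUnitaryRep θ) (hirr : IsIrreducibleRep θ)
    (S : Finset G) (hS : IsDoubleCosetReps K S)
    (τ : G → G) (hτbij : Function.Bijective τ)
    (hτanti : ∀ a b : G, τ (a * b) = τ b * τ a)
    (sharp : (V →ₗ[ℂ] V) →ₗ[ℂ] (V →ₗ[ℂ] V)) (hsharpbij : Function.Bijective sharp)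
    (hsharpanti : ∀ A B : V →ₗ[ℂ] V, sharp (A ∘ₗ B) = sharp B ∘ₗ sharp A)
    -- τ(K) = K
    (hτK : ∀ g : G, g ∈ K ↔ τ g ∈ K)
    -- θ(τ k) = θ(k)^♯
    (hθτ : ∀ k k' : K, (k' : G) = τ (k : G) →
      (θ k').toLinearMap = sharp (θ k).toLinearMap)
    -- the condition on the elements of S₀
    (hS₀ : ∀ s ∈ S, interSpace K θ s ≠ ⊥ →
      ∃ k₁ k₂ : K, τ s = (k₁ : G) * s * (k₂ : G) ∧
        ∀ T ∈ interSpace K θ s,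
          LinearMap.adjoint (θ k₂).toLinearMap ∘ₗ T ∘ₗ
              LinearMap.adjoint (θ k₁).toLinearMap = sharp T)
    -- ♯ and * commute
    (hsharpadj : ∀ T : V →ₗ[ℂ] V, LinearMap.adjoint (sharp T) = sharp (LinearMap.adjoint T)) :
    IsMultFree K θ := by
  have hconv : ∀ {F₁ F₂ : G → (V →ₗ[ℂ] V)}, IsHecke K θ F₁ → IsHecke K θ F₂ →
      heckeConv F₁ F₂ = heckeConv F₂ F₁ := fun h₁ h₂ =>
    conv_comm_of_key K θ τ hτbij hτanti sharp hsharpbij.1 hsharpanti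
      (fun F hF => key_tau_sharp K θ hu S hS τ hτbij hτanti sharp hsharpanti hτK hθτ hS₀ hF) h₁ h₂
  have hcomm : ∀ {T₁ T₂ : ↥(ind K θ) →ₗ[ℂ] ↥(ind K θ)},
      T₁ ∈ commutant K θ → T₂ ∈ commutant K θ → T₁ ∘ₗ T₂ = T₂ ∘ₗ T₁ :=
    fun h₁ h₂ => commutant_comm K θ hconv h₁ h₂
  intro W _ _ _ σ hσ
  by_cases hbot : homGInd K θ σ = ⊥
  · rw [hbot, finrank_bot]
    norm_num
  · obtain ⟨A, hA, hA0⟩ := (Submodule.ne_bot_iff _).mp hbot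
    refine finrank_le_one (⟨A, hA⟩ : ↥(homGInd K θ σ)) ?_
    rintro ⟨B, hB⟩
    obtain ⟨c, hc⟩ := mult_le_one_of_commutant_comm K θ hcomm σ hσ hA hB hA0
    exact ⟨c, Subtype.ext (by simp [hc])⟩

end MFT
end
end
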